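/- arXiv:1501.00793 — 9 statements merged into one kernel-verified Lean document; each statement's English description precedes it below -/
import Mathlib

section
/- Let k be a real number with k ≠ 0, k ≠ 1 and k ≠ -1/2, and let λ₁,λ₂,λ₃,λ₄ and λ̄₁,λ̄₂,λ̄₃,λ̄₄ be positive reals. For t ≥ 0 define A(t)=λ₁, B(t)=λ₂, C(t)=λ₃, D(t)=λ₄+4(k²+k+1)t and Ā(t)=λ̄₁, B̄(t)=λ̄₂, C̄(t)=λ̄₃, D̄(t)=λ̄₄+4(k²+k+1)t. Then ((A-Ā)/A)² + ((B-B̄)/B)² + ((C-C̄)/C)² + ((D-D̄)/D)² tends to 0 as t → ∞ if and only if λ̄₁=λ₁, λ̄₂=λ₂ and λ̄₃=λ₃ (with λ̄₄ arbitrary); in particular the quasi-convergence class [g]_α of such a metric is exactly a 1-parameter family. -/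
/-- class A2iv: quasi-convergence of diagonal metrics in the same
frame is equivalent to matching of the first three initial data; `[g]_α` is a
1-parameter family. -/
theorem stmt_0 (k : ℝ) (hk0 : k ≠ 0) (hk1 : k ≠ 1) (hk2 : k ≠ -(1/2))
    (l1 l2 l3 l4 m1 m2 m3 m4 : ℝ)
    (hl1 : 0 < l1) (hl2 : 0 < l2) (hl3 : 0 < l3) (hl4 : 0 < l4)
    (hm1 : 0 < m1) (hm2 : 0 < m2) (hm3 : 0 < m3) (hm4 : 0 < m4)
    (A B C D Ab Bb Cb Db : ℝ → ℝ)
    (hA : ∀ t : ℝ, A t = l1) (hB : ∀ t : ℝ, B t = l2)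
    (hC : ∀ t : ℝ, C t = l3) (hD : ∀ t : ℝ, D t = l4 + 4 * (k ^ 2 + k + 1) * t)
    (hAb : ∀ t : ℝ, Ab t = m1) (hBb : ∀ t : ℝ, Bb t = m2)
    (hCb : ∀ t : ℝ, Cb t = m3) (hDb : ∀ t : ℝ, Db t = m4 + 4 * (k ^ 2 + k + 1) * t) :
    Filter.Tendsto (fun t : ℝ =>
        ((A t - Ab t) / A t) ^ 2 + ((B t - Bb t) / B t) ^ 2 +
        ((C t - Cb t) / C t) ^ 2 + ((D t - Db t) / D t) ^ 2)
      Filter.atTop (nhds 0) ↔ (m1 = l1 ∧ m2 = l2 ∧ m3 = l3) := by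
  have hq : (0:ℝ) < 4 * (k ^ 2 + k + 1) := by nlinarith [sq_nonneg (k + 1/2)]
  set c : ℝ := ((l1 - m1) / l1) ^ 2 + ((l2 - m2) / l2) ^ 2 + ((l3 - m3) / l3) ^ 2 with hc
  -- D t - Db t = l4 - m4, and D t → ∞
  have hDtop : Filter.Tendsto D Filter.atTop Filter.atTop := by
    have : Filter.Tendsto (fun t : ℝ => l4 + 4 * (k ^ 2 + k + 1) * t)
        Filter.atTop Filter.atTop :=
      Filter.tendsto_atTop_add_const_left _ _
        (Filter.Tendsto.const_mul_atTop hq Filter.tendsto_id)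
    exact this.congr (fun t => (hD t).symm)
  have h4 : Filter.Tendsto (fun t => ((D t - Db t) / D t) ^ 2) Filter.atTop (nhds 0) := by
    have hdiff : (fun t => (D t - Db t) / D t) = fun t => (l4 - m4) / D t := by
      funext t; simp only [hD, hDb]; ring
    have h0 : Filter.Tendsto (fun t => (l4 - m4) / D t) Filter.atTop (nhds 0) :=
      Filter.Tendsto.div_atTop tendsto_const_nhds hDtop
    have := (hdiff ▸ h0 : Filter.Tendsto (fun t => (D t - Db t) / D t) Filter.atTop (nhds 0))
    simpa using this.pow 2
  have hmain : Filter.Tendsto (fun t : ℝ =>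
        ((A t - Ab t) / A t) ^ 2 + ((B t - Bb t) / B t) ^ 2 +
        ((C t - Cb t) / C t) ^ 2 + ((D t - Db t) / D t) ^ 2)
      Filter.atTop (nhds c) := by
    have : Filter.Tendsto (fun t : ℝ => c + ((D t - Db t) / D t) ^ 2)
        Filter.atTop (nhds (c + 0)) := tendsto_const_nhds.add h4
    rw [add_zero] at this
    refine this.congr (fun t => ?_)
    rw [hA t, hB t, hC t, hAb t, hBb t, hCb t]
    try rw [hc]
    try ring
  constructor
  · intro h
    have hc0 : ((l1 - m1) / l1) ^ 2 + ((l2 - m2) / l2) ^ 2 + ((l3 - m3) / l3) ^ 2 = 0 :=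
      hc.symm.trans (tendsto_nhds_unique hmain h)
    have e1 : ((l1 - m1) / l1) ^ 2 = 0 := by
      nlinarith [sq_nonneg ((l1 - m1) / l1), sq_nonneg ((l2 - m2) / l2),
        sq_nonneg ((l3 - m3) / l3)]
    have e2 : ((l2 - m2) / l2) ^ 2 = 0 := by
      nlinarith [sq_nonneg ((l1 - m1) / l1), sq_nonneg ((l2 - m2) / l2),
        sq_nonneg ((l3 - m3) / l3)]
    have e3 : ((l3 - m3) / l3) ^ 2 = 0 := by
      nlinarith [sq_nonneg ((l1 - m1) / l1), sq_nonneg ((l2 - m2) / l2),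
        sq_nonneg ((l3 - m3) / l3)]
    have f1 : l1 - m1 = 0 := by
      have := pow_eq_zero_iff (n := 2) (by norm_num) |>.mp e1
      field_simp at this; linarith [this]
    have f2 : l2 - m2 = 0 := by
      have := pow_eq_zero_iff (n := 2) (by norm_num) |>.mp e2
      field_simp at this; linarith [this]
    have f3 : l3 - m3 = 0 := by
      have := pow_eq_zero_iff (n := 2) (by norm_num) |>.mp e3
      field_simp at this; linarith [this]
    exact ⟨by linarith, by linarith, by linarith⟩
  · rintro ⟨rfl, rfl, rfl⟩
    have : c = 0 := by simp [hc]
    rw [this] at hmain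
    exact hmain
end

section
/- Let k be a real number with k ≠ 0, k ≠ 1 and k ≠ -1/2, let λ₁,λ₂,λ₃,λ₄ and λ̄₁,λ̄₂,λ̄₃,λ̄₄ be positive reals, and let a,b,c be arbitrary real numbers. For t ≥ 0 define A(t)=λ₁, B(t)=λ₂, C(t)=λ₃, D(t)=λ₄+4(k²+k+1)t and Ā(t)=λ̄₁, B̄(t)=λ̄₂, C̄(t)=λ̄₃, D̄(t)=λ̄₄+4(k²+k+1)t. Then the quantity ((A-Ā)/A)² + ((B-B̄)/B)² + ((C-C̄)/C)² + 2(Āa)²/(AD) + 2(B̄b)²/(BD) + 2(C̄c)²/(CD) + ((a²Ā+b²B̄+c²C̄+D̄-D)/D)² tends to 0 as t → ∞ if and only if λ̄₁=λ₁, λ̄₂=λ₂ and λ̄₃=λ₃ (with λ̄₄ arbitrary); in particular the quasi-convergence class [g] is exactly a 1-parameter family. -/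
/-- class A2iv, different frames: quasi-convergence is equivalent
to matching of the first three initial data; `[g]` is a 1-parameter family. -/
theorem stmt_1 (k : ℝ) (hk0 : k ≠ 0) (hk1 : k ≠ 1) (hk2 : k ≠ -(1/2))
    (l1 l2 l3 l4 m1 m2 m3 m4 a b c : ℝ)
    (hl1 : 0 < l1) (hl2 : 0 < l2) (hl3 : 0 < l3) (hl4 : 0 < l4)
    (hm1 : 0 < m1) (hm2 : 0 < m2) (hm3 : 0 < m3) (hm4 : 0 < m4)
    (A B C D Ab Bb Cb Db : ℝ → ℝ)
    (hA : ∀ t : ℝ, A t = l1) (hB : ∀ t : ℝ, B t = l2)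
    (hC : ∀ t : ℝ, C t = l3) (hD : ∀ t : ℝ, D t = l4 + 4 * (k ^ 2 + k + 1) * t)
    (hAb : ∀ t : ℝ, Ab t = m1) (hBb : ∀ t : ℝ, Bb t = m2)
    (hCb : ∀ t : ℝ, Cb t = m3) (hDb : ∀ t : ℝ, Db t = m4 + 4 * (k ^ 2 + k + 1) * t) :
    Filter.Tendsto (fun t : ℝ =>
        ((A t - Ab t) / A t) ^ 2 + ((B t - Bb t) / B t) ^ 2 +
        ((C t - Cb t) / C t) ^ 2 +
        2 * (Ab t * a) ^ 2 / (A t * D t) +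
        2 * (Bb t * b) ^ 2 / (B t * D t) +
        2 * (Cb t * c) ^ 2 / (C t * D t) +
        ((a ^ 2 * Ab t + b ^ 2 * Bb t + c ^ 2 * Cb t + Db t - D t) / D t) ^ 2)
      Filter.atTop (nhds 0) ↔ (m1 = l1 ∧ m2 = l2 ∧ m3 = l3) := by
  have hc0 : (0:ℝ) < 4 * (k ^ 2 + k + 1) := by nlinarith [sq_nonneg (k + 1/2)]
  have hDtop : Filter.Tendsto D Filter.atTop Filter.atTop := by
    have : Filter.Tendsto (fun t : ℝ => l4 + 4 * (k ^ 2 + k + 1) * t)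
        Filter.atTop Filter.atTop :=
      Filter.tendsto_atTop_add_const_left _ _
        (Filter.Tendsto.const_mul_atTop hc0 Filter.tendsto_id)
    exact this.congr (fun t => (hD t).symm)
  set K : ℝ := ((l1 - m1) / l1) ^ 2 + ((l2 - m2) / l2) ^ 2 + ((l3 - m3) / l3) ^ 2
    with hK
  have h1 : ∀ (q p : ℝ), 0 < p →
      Filter.Tendsto (fun t => q / (p * D t)) Filter.atTop (nhds 0) := fun q p hp =>
    Filter.Tendsto.div_atTop tendsto_const_nhds (hDtop.const_mul_atTop hp)
  have h4 : Filter.Tendsto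
      (fun t => ((a ^ 2 * m1 + b ^ 2 * m2 + c ^ 2 * m3 + m4 - l4) / D t) ^ 2)
      Filter.atTop (nhds 0) := by
    have := (Filter.Tendsto.div_atTop
      (tendsto_const_nhds (x := a ^ 2 * m1 + b ^ 2 * m2 + c ^ 2 * m3 + m4 - l4)) hDtop).pow 2
    simpa using this
  have hg : Filter.Tendsto (fun t => 2 * (m1 * a) ^ 2 / (l1 * D t) +
      2 * (m2 * b) ^ 2 / (l2 * D t) + 2 * (m3 * c) ^ 2 / (l3 * D t) +
      ((a ^ 2 * m1 + b ^ 2 * m2 + c ^ 2 * m3 + m4 - l4) / D t) ^ 2)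
      Filter.atTop (nhds 0) := by
    have := (((h1 (2 * (m1 * a) ^ 2) l1 hl1).add (h1 (2 * (m2 * b) ^ 2) l2 hl2)).add
      (h1 (2 * (m3 * c) ^ 2) l3 hl3)).add h4
    simpa using this
  have hfe : (fun t : ℝ =>
        ((A t - Ab t) / A t) ^ 2 + ((B t - Bb t) / B t) ^ 2 +
        ((C t - Cb t) / C t) ^ 2 +
        2 * (Ab t * a) ^ 2 / (A t * D t) +
        2 * (Bb t * b) ^ 2 / (B t * D t) +
        2 * (Cb t * c) ^ 2 / (C t * D t) +
        ((a ^ 2 * Ab t + b ^ 2 * Bb t + c ^ 2 * Cb t + Db t - D t) / D t) ^ 2) =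
      fun t => K + (2 * (m1 * a) ^ 2 / (l1 * D t) +
        2 * (m2 * b) ^ 2 / (l2 * D t) + 2 * (m3 * c) ^ 2 / (l3 * D t) +
        ((a ^ 2 * m1 + b ^ 2 * m2 + c ^ 2 * m3 + m4 - l4) / D t) ^ 2) := by
    funext t
    rw [hA, hB, hC, hAb, hBb, hCb, hD, hDb, hK]
    ring
  rw [hfe]
  constructor
  · intro h
    have h' : Filter.Tendsto (fun t => K + (2 * (m1 * a) ^ 2 / (l1 * D t) +
        2 * (m2 * b) ^ 2 / (l2 * D t) + 2 * (m3 * c) ^ 2 / (l3 * D t) +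
        ((a ^ 2 * m1 + b ^ 2 * m2 + c ^ 2 * m3 + m4 - l4) / D t) ^ 2))
        Filter.atTop (nhds (K + 0)) := tendsto_const_nhds.add hg
    have hK0 : K = 0 := by
      have := tendsto_nhds_unique h' h
      linarith
    have s1 := sq_nonneg ((l1 - m1) / l1)
    have s2 := sq_nonneg ((l2 - m2) / l2)
    have s3 := sq_nonneg ((l3 - m3) / l3)
    have e1 : (l1 - m1) / l1 = 0 := by
      have : ((l1 - m1) / l1) ^ 2 = 0 := by rw [hK] at hK0; linarith
      exact (pow_eq_zero_iff two_ne_zero).mp this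
    have e2 : (l2 - m2) / l2 = 0 := by
      have : ((l2 - m2) / l2) ^ 2 = 0 := by rw [hK] at hK0; linarith
      exact (pow_eq_zero_iff two_ne_zero).mp this
    have e3 : (l3 - m3) / l3 = 0 := by
      have : ((l3 - m3) / l3) ^ 2 = 0 := by rw [hK] at hK0; linarith
      exact (pow_eq_zero_iff two_ne_zero).mp this
    refine ⟨?_, ?_, ?_⟩
    · rcases div_eq_zero_iff.mp e1 with h0 | h0
      · linarith
      · exact absurd h0 hl1.ne'
    · rcases div_eq_zero_iff.mp e2 with h0 | h0
      · linarith
      · exact absurd h0 hl2.ne'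
    · rcases div_eq_zero_iff.mp e3 with h0 | h0
      · linarith
      · exact absurd h0 hl3.ne'
  · rintro ⟨e1, e2, e3⟩
    have hK0 : K = 0 := by rw [hK, e1, e2, e3]; simp
    simpa [hK0] using hg
end

section
/- Let k ≠ 0 be real and let λ₁,λ₂,λ₃,λ₄ and λ̄₁,λ̄₂,λ̄₃,λ̄₄ be positive reals. Suppose A,B,C,D : [0,∞) → (0,∞) are differentiable and satisfy dA/dt = -(A²-B²)/(BD), dB/dt = -(B²-A²)/(AD), dC/dt = 0, dD/dt = ((A-B)² + 12k²AB)/(AB) with A(0)=λ₁, B(0)=λ₂, C(0)=λ₃, D(0)=λ₄, and suppose (as holds for these solutions) that A(t) → √(λ₁λ₂) and B(t) → √(λ₁λ₂) as t → ∞. Let Ā,B̄,C̄,D̄ satisfy the same ODE system with initial data λ̄₁,λ̄₂,λ̄₃,λ̄₄ and with Ā(t) → √(λ̄₁λ̄₂), B̄(t) → √(λ̄₁λ̄₂). Then ((A-Ā)/A)² + ((B-B̄)/B)² + ((C-C̄)/C)² + ((D-D̄)/D)² tends to 0 as t → ∞ if and only if λ̄₁λ̄₂ = λ₁λ₂ and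 λ̄₃ = λ₃ (with λ̄₄ arbitrary); in particular the quasi-convergence class [g]_α is exactly a 2-parameter family. -/
open Filter Set

set_option maxHeartbeats 1000000 in
/-- Auxiliary: solution with derivative bounded below by `c > 0` grows at least linearly. -/
theorem aux_lower (c : ℝ) (D d : ℝ → ℝ)
    (hD : ∀ t ∈ Set.Ici (0:ℝ), HasDerivWithinAt D (d t) (Set.Ici 0) t)
    (hd : ∀ t ∈ Set.Ici (0:ℝ), c ≤ d t) :
    ∀ t ∈ Set.Ici (0:ℝ), c * t ≤ D t - D 0 := by
  have hderiv : ∀ x ∈ interior (Set.Ici (0:ℝ)), HasDerivAt D (d x) x := by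
    intro x hx
    rw [interior_Ici] at hx
    exact (hD x (mem_Ici.2 (le_of_lt (mem_Ioi.1 hx)))).hasDerivAt (Ici_mem_nhds hx)
  have hcont : ContinuousOn D (Set.Ici 0) := fun x hx => (hD x hx).continuousWithinAt
  have hdiff : DifferentiableOn ℝ D (interior (Set.Ici (0:ℝ))) := fun x hx =>
    (hderiv x hx).differentiableAt.differentiableWithinAt
  have hge : ∀ x ∈ interior (Set.Ici (0:ℝ)), c ≤ deriv D x := by
    intro x hx
    rw [(hderiv x hx).deriv]
    rw [interior_Ici] at hx
    exact hd x (mem_Ici.2 (le_of_lt (mem_Ioi.1 hx)))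
  intro t ht
  have key := (convex_Ici (0:ℝ)).mul_sub_le_image_sub_of_le_deriv hcont hdiff hge
    0 Set.self_mem_Ici t ht ht
  simpa using key

set_option maxHeartbeats 1000000 in
/-- Auxiliary: the `D`-term tends to zero. -/
theorem aux_Dterm (c : ℝ) (hc : 0 < c) (D Db d db : ℝ → ℝ)
    (hD : ∀ t ∈ Set.Ici (0:ℝ), HasDerivWithinAt D (d t) (Set.Ici 0) t)
    (hDb : ∀ t ∈ Set.Ici (0:ℝ), HasDerivWithinAt Db (db t) (Set.Ici 0) t)
    (hd : ∀ t ∈ Set.Ici (0:ℝ), c ≤ d t)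
    (hD0 : 0 < D 0)
    (hlim : Filter.Tendsto (fun t => d t - db t) Filter.atTop (nhds 0)) :
    Filter.Tendsto (fun t => (D t - Db t) / D t) Filter.atTop (nhds 0) := by
  have hlow := aux_lower c D d hD hd
  rw [NormedAddCommGroup.tendsto_nhds_zero] at hlim ⊢
  intro ε hε
  set ε' := c * ε / 2 with hε'def
  have hε' : 0 < ε' := by positivity
  obtain ⟨T0, hT0⟩ := Filter.eventually_atTop.mp ((hlim ε' hε').and (eventually_ge_atTop 0))
  set T := max T0 0 with hTdef
  have hT0le : (0:ℝ) ≤ T := le_max_right _ _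
  have hTprop : ∀ t, T ≤ t → ‖d t - db t‖ ≤ ε' ∧ (0:ℝ) ≤ t :=
    fun t ht => ⟨(hT0 t (le_trans (le_max_left _ _) ht)).1.le,
      (hT0 t (le_trans (le_max_left _ _) ht)).2⟩
  -- MVT bound for f := D - Db on [T, ∞)
  have hMVT : ∀ t, T ≤ t → |(D t - Db t) - (D T - Db T)| ≤ ε' * (t - T) := by
    intro t ht
    have key := Convex.norm_image_sub_le_of_norm_hasDerivWithin_le
      (f := fun s => D s - Db s) (f' := fun s => d s - db s) (s := Set.Ici T)
      (fun x hx => ((hD x (le_trans hT0le hx)).sub (hDb x (le_trans hT0le hx))).mono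
        (Set.Ici_subset_Ici.2 hT0le))
      (fun x hx => (hTprop x hx).1) (convex_Ici T) self_mem_Ici ht
    have habs : |t - T| = t - T := abs_of_nonneg (by linarith)
    rw [Real.norm_eq_abs, Real.norm_eq_abs, habs] at key
    exact key
  -- the bounding function tends to ε'/c < ε
  have hbound : Filter.Tendsto (fun t => |D T - Db T| / (c * t) + ε' / c) Filter.atTop
      (nhds (0 + ε' / c)) :=
    (tendsto_const_nhds.div_atTop (tendsto_id.const_mul_atTop hc)).add tendsto_const_nhds
  have hlt : 0 + ε' / c < ε := by
    rw [zero_add, hε'def]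
    rw [div_lt_iff₀ hc]
    nlinarith
  filter_upwards [hbound.eventually_lt_const hlt, eventually_ge_atTop (max T 1)] with t h1 h2
  have htT : T ≤ t := le_trans (le_max_left _ _) h2
  have ht1 : (1:ℝ) ≤ t := le_trans (le_max_right _ _) h2
  have ht0 : (0:ℝ) < t := by linarith
  have hDt : c * t ≤ D t := by
    have := hlow t (le_of_lt ht0); linarith
  have hDtpos : 0 < D t := lt_of_lt_of_le (by positivity) hDt
  have hnum : |D t - Db t| ≤ |D T - Db T| + ε' * t := by
    have h3 := hMVT t htT
    have h4 : |D t - Db t| ≤ |D T - Db T| + |(D t - Db t) - (D T - Db T)| := by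
      have := abs_add_le (D T - Db T) ((D t - Db t) - (D T - Db T))
      simpa using this
    nlinarith
  have hdiv : |D t - Db t| / D t ≤ (|D T - Db T| + ε' * t) / (c * t) :=
    div_le_div₀ (by positivity) hnum (by positivity) hDt
  have heq : (|D T - Db T| + ε' * t) / (c * t) = |D T - Db T| / (c * t) + ε' / c := by
    field_simp
  rw [Real.norm_eq_abs, abs_div, abs_of_pos hDtpos]
  calc |D t - Db t| / D t ≤ (|D T - Db T| + ε' * t) / (c * t) := hdiv
    _ = |D T - Db T| / (c * t) + ε' / c := heq
    _ < ε := h1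

set_option maxHeartbeats 1000000 in
/-- class A3: for solutions of the A3 Ricci-flow ODE system,
quasi-convergence in the same frame holds iff `λ̄₁λ̄₂ = λ₁λ₂` and `λ̄₃ = λ₃`;
`[g]_α` is a 2-parameter family. -/
theorem stmt_2 (k : ℝ) (hk : k ≠ 0)
    (l1 l2 l3 l4 m1 m2 m3 m4 : ℝ)
    (hl1 : 0 < l1) (hl2 : 0 < l2) (hl3 : 0 < l3) (hl4 : 0 < l4)
    (hm1 : 0 < m1) (hm2 : 0 < m2) (hm3 : 0 < m3) (hm4 : 0 < m4)
    (A B C D Ab Bb Cb Db : ℝ → ℝ)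
    (hApos : ∀ t ∈ Set.Ici (0:ℝ), 0 < A t) (hBpos : ∀ t ∈ Set.Ici (0:ℝ), 0 < B t)
    (hCpos : ∀ t ∈ Set.Ici (0:ℝ), 0 < C t) (hDpos : ∀ t ∈ Set.Ici (0:ℝ), 0 < D t)
    (hAbpos : ∀ t ∈ Set.Ici (0:ℝ), 0 < Ab t) (hBbpos : ∀ t ∈ Set.Ici (0:ℝ), 0 < Bb t)
    (hCbpos : ∀ t ∈ Set.Ici (0:ℝ), 0 < Cb t) (hDbpos : ∀ t ∈ Set.Ici (0:ℝ), 0 < Db t)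
    (hA : ∀ t ∈ Set.Ici (0:ℝ),
      HasDerivWithinAt A (-((A t) ^ 2 - (B t) ^ 2) / (B t * D t)) (Set.Ici 0) t)
    (hB : ∀ t ∈ Set.Ici (0:ℝ),
      HasDerivWithinAt B (-((B t) ^ 2 - (A t) ^ 2) / (A t * D t)) (Set.Ici 0) t)
    (hC : ∀ t ∈ Set.Ici (0:ℝ), HasDerivWithinAt C 0 (Set.Ici 0) t)
    (hD : ∀ t ∈ Set.Ici (0:ℝ),
      HasDerivWithinAt D (((A t - B t) ^ 2 + 12 * k ^ 2 * A t * B t) / (A t * B t))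
        (Set.Ici 0) t)
    (hA0 : A 0 = l1) (hB0 : B 0 = l2) (hC0 : C 0 = l3) (hD0 : D 0 = l4)
    (hAlim : Filter.Tendsto A Filter.atTop (nhds (Real.sqrt (l1 * l2))))
    (hBlim : Filter.Tendsto B Filter.atTop (nhds (Real.sqrt (l1 * l2))))
    (hAb : ∀ t ∈ Set.Ici (0:ℝ),
      HasDerivWithinAt Ab (-((Ab t) ^ 2 - (Bb t) ^ 2) / (Bb t * Db t)) (Set.Ici 0) t)
    (hBb : ∀ t ∈ Set.Ici (0:ℝ),
      HasDerivWithinAt Bb (-((Bb t) ^ 2 - (Ab t) ^ 2) / (Ab t * Db t)) (Set.Ici 0) t)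
    (hCb : ∀ t ∈ Set.Ici (0:ℝ), HasDerivWithinAt Cb 0 (Set.Ici 0) t)
    (hDb : ∀ t ∈ Set.Ici (0:ℝ),
      HasDerivWithinAt Db (((Ab t - Bb t) ^ 2 + 12 * k ^ 2 * Ab t * Bb t) / (Ab t * Bb t))
        (Set.Ici 0) t)
    (hAb0 : Ab 0 = m1) (hBb0 : Bb 0 = m2) (hCb0 : Cb 0 = m3) (hDb0 : Db 0 = m4)
    (hAblim : Filter.Tendsto Ab Filter.atTop (nhds (Real.sqrt (m1 * m2))))
    (hBblim : Filter.Tendsto Bb Filter.atTop (nhds (Real.sqrt (m1 * m2)))) :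
    Filter.Tendsto (fun t : ℝ =>
        ((A t - Ab t) / A t) ^ 2 + ((B t - Bb t) / B t) ^ 2 +
        ((C t - Cb t) / C t) ^ 2 + ((D t - Db t) / D t) ^ 2)
      Filter.atTop (nhds 0) ↔ (m1 * m2 = l1 * l2 ∧ m3 = l3) := by
  set L := Real.sqrt (l1 * l2) with hLdef
  set M := Real.sqrt (m1 * m2) with hMdef
  have hL : 0 < L := Real.sqrt_pos.2 (by positivity)
  have hM : 0 < M := Real.sqrt_pos.2 (by positivity)
  -- C and Cb are constant
  have hCconst : ∀ t ∈ Set.Ici (0:ℝ), C t = l3 := by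
    intro t ht
    have key := Convex.norm_image_sub_le_of_norm_hasDerivWithin_le
      (f' := fun _ => (0:ℝ)) (C := (0:ℝ)) hC (fun x _ => by simp) (convex_Ici 0) self_mem_Ici ht
    rw [hC0] at key
    have : ‖C t - l3‖ ≤ 0 := by simpa using key
    have := le_antisymm this (norm_nonneg _)
    rw [norm_eq_zero, sub_eq_zero] at this
    exact this
  have hCbconst : ∀ t ∈ Set.Ici (0:ℝ), Cb t = m3 := by
    intro t ht
    have key := Convex.norm_image_sub_le_of_norm_hasDerivWithin_le
      (f' := fun _ => (0:ℝ)) (C := (0:ℝ)) hCb (fun x _ => by simp) (convex_Ici 0) self_mem_Ici ht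
    rw [hCb0] at key
    have : ‖Cb t - m3‖ ≤ 0 := by simpa using key
    have := le_antisymm this (norm_nonneg _)
    rw [norm_eq_zero, sub_eq_zero] at this
    exact this
  -- the D term always tends to 0
  set c := 12 * k ^ 2 with hcdef
  have hc : 0 < c := by positivity
  set d : ℝ → ℝ := fun t => ((A t - B t) ^ 2 + 12 * k ^ 2 * A t * B t) / (A t * B t) with hddef
  set db : ℝ → ℝ := fun t => ((Ab t - Bb t) ^ 2 + 12 * k ^ 2 * Ab t * Bb t) / (Ab t * Bb t)
    with hdbdef
  have hdlim : Filter.Tendsto d Filter.atTop (nhds c) := by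
    have hnum : Filter.Tendsto (fun t => (A t - B t) ^ 2 + 12 * k ^ 2 * A t * B t)
        Filter.atTop (nhds ((L - L) ^ 2 + 12 * k ^ 2 * L * L)) :=
      ((hAlim.sub hBlim).pow 2).add (((tendsto_const_nhds.mul hAlim)).mul hBlim)
    have hden : Filter.Tendsto (fun t => A t * B t) Filter.atTop (nhds (L * L)) :=
      hAlim.mul hBlim
    have := hnum.div hden (by positivity)
    have heq : ((L - L) ^ 2 + 12 * k ^ 2 * L * L) / (L * L) = c := by
      field_simp
      ring
    rwa [heq] at this
  have hdblim : Filter.Tendsto db Filter.atTop (nhds c) := by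
    have hnum : Filter.Tendsto (fun t => (Ab t - Bb t) ^ 2 + 12 * k ^ 2 * Ab t * Bb t)
        Filter.atTop (nhds ((M - M) ^ 2 + 12 * k ^ 2 * M * M)) :=
      ((hAblim.sub hBblim).pow 2).add (((tendsto_const_nhds.mul hAblim)).mul hBblim)
    have hden : Filter.Tendsto (fun t => Ab t * Bb t) Filter.atTop (nhds (M * M)) :=
      hAblim.mul hBblim
    have := hnum.div hden (by positivity)
    have heq : ((M - M) ^ 2 + 12 * k ^ 2 * M * M) / (M * M) = c := by
      field_simp
      ring
    rwa [heq] at this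
  have hdge : ∀ t ∈ Set.Ici (0:ℝ), c ≤ d t := by
    intro t ht
    have hAB : 0 < A t * B t := mul_pos (hApos t ht) (hBpos t ht)
    rw [hddef]
    rw [le_div_iff₀ hAB]
    nlinarith [sq_nonneg (A t - B t)]
  have hDterm : Filter.Tendsto (fun t => (D t - Db t) / D t) Filter.atTop (nhds 0) := by
    refine aux_Dterm c hc D Db d db hD hDb hdge (by rw [hD0]; exact hl4) ?_
    have := hdlim.sub hdblim
    simpa using this
  -- the A and B terms tend to explicit limits
  have hAterm : Filter.Tendsto (fun t => ((A t - Ab t) / A t) ^ 2) Filter.atTop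
      (nhds (((L - M) / L) ^ 2)) :=
    ((hAlim.sub hAblim).div hAlim hL.ne').pow 2
  have hBterm : Filter.Tendsto (fun t => ((B t - Bb t) / B t) ^ 2) Filter.atTop
      (nhds (((L - M) / L) ^ 2)) :=
    ((hBlim.sub hBblim).div hBlim hL.ne').pow 2
  -- the C term is eventually constant
  have hCev : (fun t => ((C t - Cb t) / C t) ^ 2) =ᶠ[Filter.atTop]
      (fun _ => ((l3 - m3) / l3) ^ 2) := by
    filter_upwards [eventually_ge_atTop (0:ℝ)] with t ht
    rw [hCconst t ht, hCbconst t ht]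
  have hCterm : Filter.Tendsto (fun t => ((C t - Cb t) / C t) ^ 2) Filter.atTop
      (nhds (((l3 - m3) / l3) ^ 2)) := by
    rw [Filter.tendsto_congr' hCev]
    exact tendsto_const_nhds
  constructor
  · intro hsum
    -- squeeze each term to 0
    have tA : Filter.Tendsto (fun t => ((A t - Ab t) / A t) ^ 2) Filter.atTop (nhds 0) := by
      refine squeeze_zero (fun t => sq_nonneg _) (fun t => ?_) hsum
      nlinarith [sq_nonneg ((B t - Bb t) / B t), sq_nonneg ((C t - Cb t) / C t),
        sq_nonneg ((D t - Db t) / D t)]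
    have tC : Filter.Tendsto (fun t => ((C t - Cb t) / C t) ^ 2) Filter.atTop (nhds 0) := by
      refine squeeze_zero (fun t => sq_nonneg _) (fun t => ?_) hsum
      nlinarith [sq_nonneg ((A t - Ab t) / A t), sq_nonneg ((B t - Bb t) / B t),
        sq_nonneg ((D t - Db t) / D t)]
    have hLM : ((L - M) / L) ^ 2 = 0 := tendsto_nhds_unique hAterm tA
    have hLMeq : L = M := by
      have h1 : (L - M) / L = 0 := by
        have := sq_eq_zero_iff.mp hLM; exact this
      have h2 : L - M = 0 := by
        field_simp at h1; simpa using h1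
      linarith
    have hmm : m1 * m2 = l1 * l2 := by
      have h1 : Real.sqrt (m1 * m2) = Real.sqrt (l1 * l2) := hLMeq.symm
      have h2 := congrArg (fun x => x ^ 2) h1
      simpa [Real.sq_sqrt (by positivity : (0:ℝ) ≤ m1 * m2),
        Real.sq_sqrt (by positivity : (0:ℝ) ≤ l1 * l2)] using h2
    have hl3m3 : ((l3 - m3) / l3) ^ 2 = 0 := tendsto_nhds_unique hCterm tC
    have hm3l3 : m3 = l3 := by
      have h1 : (l3 - m3) / l3 = 0 := sq_eq_zero_iff.mp hl3m3
      have h2 : l3 - m3 = 0 := by field_simp at h1; simpa using h1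
      linarith
    exact ⟨hmm, hm3l3⟩
  · rintro ⟨hmm, hm3⟩
    have hML : M = L := by rw [hMdef, hLdef, hmm]
    have tA : Filter.Tendsto (fun t => ((A t - Ab t) / A t) ^ 2) Filter.atTop (nhds 0) := by
      have := hAterm
      rw [hML] at this
      simpa using this
    have tB : Filter.Tendsto (fun t => ((B t - Bb t) / B t) ^ 2) Filter.atTop (nhds 0) := by
      have := hBterm
      rw [hML] at this
      simpa using this
    have tC : Filter.Tendsto (fun t => ((C t - Cb t) / C t) ^ 2) Filter.atTop (nhds 0) := by
      have := hCterm
      rw [hm3] at this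
      simpa using this
    have tD : Filter.Tendsto (fun t => ((D t - Db t) / D t) ^ 2) Filter.atTop (nhds 0) := by
      have := hDterm.pow 2
      simpa using this
    have := ((tA.add tB).add tC).add tD
    simpa using this
end

section
/- Let λ₁,λ₂,λ₃,λ₄ and λ̄₁,λ̄₂,λ̄₃,λ̄₄ be positive reals. For t ≥ 0 define A(t)=λ₁(1 + 3λ₂t/(λ₁λ₄))^{1/3}, B(t)=λ₂(1 + 3λ₂t/(λ₁λ₄))^{-1/3}, C(t)=λ₃, D(t)=λ₄(1 + 3λ₂t/(λ₁λ₄))^{1/3}, and define Ā,B̄,C̄,D̄ by the same formulas with λ̄ᵢ in place of λᵢ. Then ((A-Ā)/A)² + ((B-B̄)/B)² + ((C-C̄)/C)² + ((D-D̄)/D)² tends to 0 as t → ∞ if and only if λ̄₃ = λ₃ and there exists k > 0 with λ̄₁ = kλ₁, λ̄₂ = λ₂/k and λ̄₄ = kλ₄; in particular the quasi-convergence class [g]_α is exactly a 1-parameter family. -/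
set_option maxHeartbeats 1000000

open Filter

private lemma lim1 (a b : ℝ) (ha : 0 < a) (hb : 0 < b) :
    Tendsto (fun t : ℝ => (1 + b * t) / (1 + a * t)) atTop (nhds (b / a)) := by
  have h0 : Tendsto (fun t : ℝ => t⁻¹) atTop (nhds 0) := tendsto_inv_atTop_zero
  have hnum : Tendsto (fun t : ℝ => t⁻¹ + b) atTop (nhds b) := by
    simpa using h0.add_const b
  have hden : Tendsto (fun t : ℝ => t⁻¹ + a) atTop (nhds a) := by
    simpa using h0.add_const a
  have h := hnum.div hden ha.ne'
  apply Filter.Tendsto.congr' _ h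
  filter_upwards [eventually_gt_atTop 0] with t ht
  have h1 : (0:ℝ) < 1 + a * t := by nlinarith
  have h2 : (0:ℝ) < t⁻¹ + a := by positivity
  simp only [Pi.div_apply]
  field_simp

private lemma auxterm (a b p c d : ℝ) (ha : 0 < a) (hb : 0 < b) (hc : 0 < c) :
    Tendsto (fun t : ℝ =>
      ((c * (1 + a * t) ^ p - d * (1 + b * t) ^ p) / (c * (1 + a * t) ^ p)) ^ 2)
      atTop (nhds ((1 - d / c * (b / a) ^ p) ^ 2)) := by
  have h1 := lim1 a b ha hb
  have h2 : Tendsto (fun t : ℝ => ((1 + b * t) / (1 + a * t)) ^ p) atTop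
      (nhds ((b / a) ^ p)) := h1.rpow_const (Or.inl (div_pos hb ha).ne')
  have h3 : Tendsto (fun t : ℝ => (1 - d / c * ((1 + b * t) / (1 + a * t)) ^ p) ^ 2)
      atTop (nhds ((1 - d / c * (b / a) ^ p) ^ 2)) :=
    (tendsto_const_nhds.sub (tendsto_const_nhds.mul h2)).pow 2
  apply Filter.Tendsto.congr' _ h3
  filter_upwards [eventually_ge_atTop 0] with t ht
  have hu : (0:ℝ) < 1 + a * t := by nlinarith
  have hv : (0:ℝ) < 1 + b * t := by nlinarith
  have hup : (0:ℝ) < (1 + a * t) ^ p := Real.rpow_pos_of_pos hu p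
  have hvp : (0:ℝ) < (1 + b * t) ^ p := Real.rpow_pos_of_pos hv p
  rw [Real.div_rpow hv.le hu.le]
  congr 1
  field_simp

/-- class A4: quasi-convergence of diagonal metrics in the same
frame holds iff `λ̄₃ = λ₃` and `(λ̄₁,λ̄₂,λ̄₄) = (kλ₁, λ₂/k, kλ₄)` for some `k > 0`;
`[g]_α` is a 1-parameter family. -/
theorem stmt_3 (l1 l2 l3 l4 m1 m2 m3 m4 : ℝ)
    (hl1 : 0 < l1) (hl2 : 0 < l2) (hl3 : 0 < l3) (hl4 : 0 < l4)
    (hm1 : 0 < m1) (hm2 : 0 < m2) (hm3 : 0 < m3) (hm4 : 0 < m4)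
    (A B C D Ab Bb Cb Db : ℝ → ℝ)
    (hA : ∀ t : ℝ, A t = l1 * (1 + 3 * l2 * t / (l1 * l4)) ^ ((1:ℝ)/3))
    (hB : ∀ t : ℝ, B t = l2 * (1 + 3 * l2 * t / (l1 * l4)) ^ (-(1:ℝ)/3))
    (hC : ∀ t : ℝ, C t = l3)
    (hD : ∀ t : ℝ, D t = l4 * (1 + 3 * l2 * t / (l1 * l4)) ^ ((1:ℝ)/3))
    (hAb : ∀ t : ℝ, Ab t = m1 * (1 + 3 * m2 * t / (m1 * m4)) ^ ((1:ℝ)/3))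
    (hBb : ∀ t : ℝ, Bb t = m2 * (1 + 3 * m2 * t / (m1 * m4)) ^ (-(1:ℝ)/3))
    (hCb : ∀ t : ℝ, Cb t = m3)
    (hDb : ∀ t : ℝ, Db t = m4 * (1 + 3 * m2 * t / (m1 * m4)) ^ ((1:ℝ)/3)) :
    Filter.Tendsto (fun t : ℝ =>
        ((A t - Ab t) / A t) ^ 2 + ((B t - Bb t) / B t) ^ 2 +
        ((C t - Cb t) / C t) ^ 2 + ((D t - Db t) / D t) ^ 2)
      Filter.atTop (nhds 0) ↔
      (m3 = l3 ∧ ∃ k : ℝ, 0 < k ∧ m1 = k * l1 ∧ m2 = l2 / k ∧ m4 = k * l4) := by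
  set a : ℝ := 3 * l2 / (l1 * l4) with ha_def
  set b : ℝ := 3 * m2 / (m1 * m4) with hb_def
  have ha : 0 < a := by rw [ha_def]; positivity
  have hb : 0 < b := by rw [hb_def]; positivity
  have hr : 0 < b / a := div_pos hb ha
  set s : ℝ := (b / a) ^ ((1:ℝ)/3) with hs_def
  have hs : 0 < s := by rw [hs_def]; exact Real.rpow_pos_of_pos hr _
  have hrneg : (b / a) ^ (-(1:ℝ)/3) = s⁻¹ := by
    rw [hs_def, neg_div, Real.rpow_neg hr.le]
  have el : ∀ t : ℝ, 1 + 3 * l2 * t / (l1 * l4) = 1 + a * t := fun t => by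
    rw [ha_def]; ring
  have em : ∀ t : ℝ, 1 + 3 * m2 * t / (m1 * m4) = 1 + b * t := fun t => by
    rw [hb_def]; ring
  have keyA : Tendsto (fun t : ℝ => ((A t - Ab t) / A t) ^ 2) atTop
      (nhds ((1 - m1 / l1 * s) ^ 2)) := by
    apply Filter.Tendsto.congr _ (auxterm a b ((1:ℝ)/3) l1 m1 ha hb hl1)
    intro t
    rw [hA t, hAb t, el t, em t]
  have keyB : Tendsto (fun t : ℝ => ((B t - Bb t) / B t) ^ 2) atTop
      (nhds ((1 - m2 / l2 * s⁻¹) ^ 2)) := by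
    have h := auxterm a b (-(1:ℝ)/3) l2 m2 ha hb hl2
    rw [hrneg] at h
    apply Filter.Tendsto.congr _ h
    intro t
    rw [hB t, hBb t, el t, em t]
  have keyC : Tendsto (fun t : ℝ => ((C t - Cb t) / C t) ^ 2) atTop
      (nhds (((l3 - m3) / l3) ^ 2)) := by
    apply Filter.Tendsto.congr _
      (tendsto_const_nhds : Tendsto (fun _ : ℝ => ((l3 - m3) / l3) ^ 2) atTop _)
    intro t
    rw [hC t, hCb t]
  have keyD : Tendsto (fun t : ℝ => ((D t - Db t) / D t) ^ 2) atTop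
      (nhds ((1 - m4 / l4 * s) ^ 2)) := by
    apply Filter.Tendsto.congr _ (auxterm a b ((1:ℝ)/3) l4 m4 ha hb hl4)
    intro t
    rw [hD t, hDb t, el t, em t]
  have key : Tendsto (fun t : ℝ =>
        ((A t - Ab t) / A t) ^ 2 + ((B t - Bb t) / B t) ^ 2 +
        ((C t - Cb t) / C t) ^ 2 + ((D t - Db t) / D t) ^ 2) atTop
      (nhds ((1 - m1 / l1 * s) ^ 2 + (1 - m2 / l2 * s⁻¹) ^ 2 +
        ((l3 - m3) / l3) ^ 2 + (1 - m4 / l4 * s) ^ 2)) :=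
    ((keyA.add keyB).add keyC).add keyD
  constructor
  · intro h
    have hS : (1 - m1 / l1 * s) ^ 2 + (1 - m2 / l2 * s⁻¹) ^ 2 +
        ((l3 - m3) / l3) ^ 2 + (1 - m4 / l4 * s) ^ 2 = 0 :=
      tendsto_nhds_unique key h
    have q1 : 1 - m1 / l1 * s = 0 := by
      apply sq_eq_zero_iff.mp
      nlinarith [sq_nonneg (1 - m2 / l2 * s⁻¹), sq_nonneg ((l3 - m3) / l3),
        sq_nonneg (1 - m4 / l4 * s), sq_nonneg (1 - m1 / l1 * s)]
    have q2 : 1 - m2 / l2 * s⁻¹ = 0 := by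
      apply sq_eq_zero_iff.mp
      nlinarith [sq_nonneg (1 - m2 / l2 * s⁻¹), sq_nonneg ((l3 - m3) / l3),
        sq_nonneg (1 - m4 / l4 * s), sq_nonneg (1 - m1 / l1 * s)]
    have q3 : (l3 - m3) / l3 = 0 := by
      apply sq_eq_zero_iff.mp
      nlinarith [sq_nonneg (1 - m2 / l2 * s⁻¹), sq_nonneg ((l3 - m3) / l3),
        sq_nonneg (1 - m4 / l4 * s), sq_nonneg (1 - m1 / l1 * s)]
    have q4 : 1 - m4 / l4 * s = 0 := by
      apply sq_eq_zero_iff.mp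
      nlinarith [sq_nonneg (1 - m2 / l2 * s⁻¹), sq_nonneg ((l3 - m3) / l3),
        sq_nonneg (1 - m4 / l4 * s), sq_nonneg (1 - m1 / l1 * s)]
    have hm3l3 : m3 = l3 := by
      rcases div_eq_zero_iff.mp q3 with h' | h'
      · linarith
      · exact absurd h' hl3.ne'
    have e1 : m1 / l1 * s = 1 := by linarith
    have e2 : m2 / l2 * s⁻¹ = 1 := by linarith
    have e4 : m4 / l4 * s = 1 := by linarith
    have hsk : s = (m1 / l1)⁻¹ := eq_inv_of_mul_eq_one_left (by rw [mul_comm]; exact e1)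
    refine ⟨hm3l3, m1 / l1, div_pos hm1 hl1, ?_, ?_, ?_⟩
    · rw [div_mul_cancel₀ m1 hl1.ne']
    · have e2' : m2 / l2 * (m1 / l1) = 1 := by
        rw [← inv_inv (m1 / l1), ← hsk]; exact e2
      have h' : m2 / l2 = (m1 / l1)⁻¹ := eq_inv_of_mul_eq_one_right (by rw [mul_comm]; exact e2')
      rw [(div_eq_iff hl2.ne').mp h']
      ring
    · have : m4 / l4 * s = m1 / l1 * s := by rw [e1, e4]
      have h14 : m4 / l4 = m1 / l1 := mul_right_cancel₀ hs.ne' this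
      exact (div_eq_iff hl4.ne').mp h14
  · rintro ⟨h3, k, hk, h1, h2, h4⟩
    have hba : b / a = (k⁻¹) ^ (3:ℕ) := by
      rw [hb_def, ha_def, h1, h2, h4]
      field_simp [hk.ne']
    have hsk : s = k⁻¹ := by
      rw [hs_def, hba, ← Real.rpow_natCast k⁻¹ 3,
        ← Real.rpow_mul (by positivity : (0:ℝ) ≤ k⁻¹)]
      norm_num
    have e1 : m1 / l1 * s = 1 := by
      rw [h1, hsk]; field_simp [hl1.ne', hk.ne']
    have e2 : m2 / l2 * s⁻¹ = 1 := by
      rw [h2, hsk, inv_inv]; field_simp [hl2.ne', hk.ne']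
    have e4 : m4 / l4 * s = 1 := by
      rw [h4, hsk]; field_simp [hl4.ne', hk.ne']
    have hS0 : (1 - m1 / l1 * s) ^ 2 + (1 - m2 / l2 * s⁻¹) ^ 2 +
        ((l3 - m3) / l3) ^ 2 + (1 - m4 / l4 * s) ^ 2 = 0 := by
      rw [e1, e2, e4, h3]
      norm_num
    exact hS0 ▸ key
end

section
/- Let λ₁,λ₂,λ₃,λ₄ and λ̄₁,λ̄₂,λ̄₃,λ̄₄ be positive reals and let a,b,c,d,e,f be real numbers. For t ≥ 0 define A(t)=λ₁(1 + 3λ₂t/(λ₁λ₄))^{1/3}, B(t)=λ₂(1 + 3λ₂t/(λ₁λ₄))^{-1/3}, C(t)=λ₃, D(t)=λ₄(1 + 3λ₂t/(λ₁λ₄))^{1/3}, and define Ā,B̄,C̄,D̄ by the same formulas with λ̄ᵢ in place of λᵢ. Then the quantity ((Ā+b²B̄+c²C̄-A)/A)² + ((B-B̄)/B)² + ((C-C̄-a²B̄)/C)² + ((d²Ā+e²B̄+f²C̄+D̄-D)/D)² + 2(bB̄)²/(AB) + 2(bB̄a+cC̄)²/(AC) + 2(dĀ+bB̄e+cC̄f)²/(AD)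 + 2(aB̄)²/(BC) + 2(eB̄)²/(BD) + 2(aB̄e+fC̄)²/(CD) tends to 0 as t → ∞ if and only if d = 0, λ̄₃ = λ₃, and there exists k > 0 with λ̄₁ = kλ₁, λ̄₂ = λ₂/k and λ̄₄ = kλ₄; in particular the quasi-convergence class [g] is exactly a 1-parameter family. -/
open Filter Real

/-- Auxiliary continuous function: the quasi-convergence quantity expressed in the
variables `x = q/p`, `y = p/q`, `u = p⁻¹`, `w = q⁻¹`. -/
private noncomputable def phiAux (l1 l2 l3 l4 m1 m2 m3 m4 a b c d e f : ℝ)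
    (v : ℝ × ℝ × ℝ × ℝ) : ℝ :=
  (m1 / l1 * v.1 + b ^ 2 * m2 / l1 * (v.2.2.1 * v.2.2.2) + c ^ 2 * m3 / l1 * v.2.2.1 - 1) ^ 2 +
  (1 - m2 / l2 * v.2.1) ^ 2 +
  ((l3 - m3 - a ^ 2 * m2 * v.2.2.2) / l3) ^ 2 +
  (d ^ 2 * m1 / l4 * v.1 + e ^ 2 * m2 / l4 * (v.2.2.1 * v.2.2.2) + f ^ 2 * m3 / l4 * v.2.2.1
      + m4 / l4 * v.1 - 1) ^ 2 +
  2 * b ^ 2 * m2 ^ 2 * v.2.2.2 ^ 2 / (l1 * l2) +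
  2 * (b * m2 * a * v.2.2.2 + c * m3) ^ 2 * v.2.2.1 / (l1 * l3) +
  2 * (d * m1 * v.1 + b * m2 * e * (v.2.2.1 * v.2.2.2) + c * m3 * f * v.2.2.1) ^ 2 / (l1 * l4) +
  2 * a ^ 2 * m2 ^ 2 * (v.2.1 * v.2.2.2) / (l2 * l3) +
  2 * e ^ 2 * m2 ^ 2 * v.2.2.2 ^ 2 / (l2 * l4) +
  2 * (a * m2 * e * v.2.2.2 + f * m3) ^ 2 * v.2.2.1 / (l3 * l4)

set_option maxHeartbeats 1600000 in
/-- class A4, different frames: quasi-convergence holds iff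
`d = 0`, `λ̄₃ = λ₃` and `(λ̄₁,λ̄₂,λ̄₄) = (kλ₁, λ₂/k, kλ₄)` for some `k > 0`;
`[g]` is a 1-parameter family. -/
theorem stmt_4 (l1 l2 l3 l4 m1 m2 m3 m4 a b c d e f : ℝ)
    (hl1 : 0 < l1) (hl2 : 0 < l2) (hl3 : 0 < l3) (hl4 : 0 < l4)
    (hm1 : 0 < m1) (hm2 : 0 < m2) (hm3 : 0 < m3) (hm4 : 0 < m4)
    (A B C D Ab Bb Cb Db : ℝ → ℝ)
    (hA : ∀ t : ℝ, A t = l1 * (1 + 3 * l2 * t / (l1 * l4)) ^ ((1:ℝ)/3))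
    (hB : ∀ t : ℝ, B t = l2 * (1 + 3 * l2 * t / (l1 * l4)) ^ (-(1:ℝ)/3))
    (hC : ∀ t : ℝ, C t = l3)
    (hD : ∀ t : ℝ, D t = l4 * (1 + 3 * l2 * t / (l1 * l4)) ^ ((1:ℝ)/3))
    (hAb : ∀ t : ℝ, Ab t = m1 * (1 + 3 * m2 * t / (m1 * m4)) ^ ((1:ℝ)/3))
    (hBb : ∀ t : ℝ, Bb t = m2 * (1 + 3 * m2 * t / (m1 * m4)) ^ (-(1:ℝ)/3))
    (hCb : ∀ t : ℝ, Cb t = m3)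
    (hDb : ∀ t : ℝ, Db t = m4 * (1 + 3 * m2 * t / (m1 * m4)) ^ ((1:ℝ)/3)) :
    Filter.Tendsto (fun t : ℝ =>
        ((Ab t + b ^ 2 * Bb t + c ^ 2 * Cb t - A t) / A t) ^ 2 +
        ((B t - Bb t) / B t) ^ 2 +
        ((C t - Cb t - a ^ 2 * Bb t) / C t) ^ 2 +
        ((d ^ 2 * Ab t + e ^ 2 * Bb t + f ^ 2 * Cb t + Db t - D t) / D t) ^ 2 +
        2 * (b * Bb t) ^ 2 / (A t * B t) +
        2 * (b * Bb t * a + c * Cb t) ^ 2 / (A t * C t) +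
        2 * (d * Ab t + b * Bb t * e + c * Cb t * f) ^ 2 / (A t * D t) +
        2 * (a * Bb t) ^ 2 / (B t * C t) +
        2 * (e * Bb t) ^ 2 / (B t * D t) +
        2 * (a * Bb t * e + f * Cb t) ^ 2 / (C t * D t))
      Filter.atTop (nhds 0) ↔
      (d = 0 ∧ m3 = l3 ∧ ∃ k : ℝ, 0 < k ∧ m1 = k * l1 ∧ m2 = l2 / k ∧ m4 = k * l4) := by
  have hl14 : (0:ℝ) < l1 * l4 := mul_pos hl1 hl4
  have hm14 : (0:ℝ) < m1 * m4 := mul_pos hm1 hm4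
  have hcl : (0:ℝ) < 3 * l2 / (l1 * l4) := by positivity
  have hcm : (0:ℝ) < 3 * m2 / (m1 * m4) := by positivity
  set cl : ℝ := 3 * l2 / (l1 * l4) with hcl_def
  set cm : ℝ := 3 * m2 / (m1 * m4) with hcm_def
  have hr : 0 < cm / cl := div_pos hcm hcl
  set s : ℝ := (cm / cl) ^ ((1:ℝ)/3) with hs_def
  have hs : 0 < s := Real.rpow_pos_of_pos hr _
  -- basic limits
  have hPtop : Tendsto (fun t : ℝ => 1 + cl * t) atTop atTop :=
    tendsto_atTop_add_const_left _ 1 (Tendsto.const_mul_atTop hcl tendsto_id)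
  have hQtop : Tendsto (fun t : ℝ => 1 + cm * t) atTop atTop :=
    tendsto_atTop_add_const_left _ 1 (Tendsto.const_mul_atTop hcm tendsto_id)
  have hp : Tendsto (fun t : ℝ => (1 + cl * t) ^ ((1:ℝ)/3)) atTop atTop :=
    (tendsto_rpow_atTop (by norm_num : (0:ℝ) < 1/3)).comp hPtop
  have hq : Tendsto (fun t : ℝ => (1 + cm * t) ^ ((1:ℝ)/3)) atTop atTop :=
    (tendsto_rpow_atTop (by norm_num : (0:ℝ) < 1/3)).comp hQtop
  have hu : Tendsto (fun t : ℝ => ((1 + cl * t) ^ ((1:ℝ)/3))⁻¹) atTop (nhds 0) :=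
    hp.inv_tendsto_atTop
  have hw : Tendsto (fun t : ℝ => ((1 + cm * t) ^ ((1:ℝ)/3))⁻¹) atTop (nhds 0) :=
    hq.inv_tendsto_atTop
  have hratio : Tendsto (fun t : ℝ => (1 + cm * t) / (1 + cl * t)) atTop (nhds (cm / cl)) := by
    have h : Tendsto (fun t : ℝ => (t⁻¹ + cm) / (t⁻¹ + cl)) atTop
        (nhds ((0 + cm) / (0 + cl))) :=
      (tendsto_inv_atTop_zero.add tendsto_const_nhds).div
        (tendsto_inv_atTop_zero.add tendsto_const_nhds) (by simpa using hcl.ne')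
    rw [zero_add, zero_add] at h
    refine Tendsto.congr' ?_ h
    filter_upwards [eventually_gt_atTop 0] with t ht
    rw [div_eq_div_iff (by positivity) (by nlinarith)]
    field_simp
  have hx : Tendsto (fun t : ℝ =>
      (1 + cm * t) ^ ((1:ℝ)/3) / (1 + cl * t) ^ ((1:ℝ)/3)) atTop (nhds s) := by
    have h := hratio.rpow_const (p := (1:ℝ)/3) (Or.inr (by norm_num))
    refine Tendsto.congr' ?_ h
    filter_upwards [eventually_ge_atTop 0] with t ht
    have h1 : (0:ℝ) ≤ 1 + cl * t := by nlinarith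
    have h2 : (0:ℝ) ≤ 1 + cm * t := by nlinarith
    rw [Real.div_rpow h2 h1]
  have hy : Tendsto (fun t : ℝ =>
      (1 + cl * t) ^ ((1:ℝ)/3) / (1 + cm * t) ^ ((1:ℝ)/3)) atTop (nhds s⁻¹) := by
    have h := hx.inv₀ hs.ne'
    simpa [inv_div] using h
  -- the main convergence statement
  have hT : Tendsto (fun t : ℝ => phiAux l1 l2 l3 l4 m1 m2 m3 m4 a b c d e f
      ((1 + cm * t) ^ ((1:ℝ)/3) / (1 + cl * t) ^ ((1:ℝ)/3),
       (1 + cl * t) ^ ((1:ℝ)/3) / (1 + cm * t) ^ ((1:ℝ)/3),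
       ((1 + cl * t) ^ ((1:ℝ)/3))⁻¹, ((1 + cm * t) ^ ((1:ℝ)/3))⁻¹)) atTop
      (nhds (phiAux l1 l2 l3 l4 m1 m2 m3 m4 a b c d e f (s, s⁻¹, 0, 0))) := by
    have hcont : Continuous (phiAux l1 l2 l3 l4 m1 m2 m3 m4 a b c d e f) := by
      unfold phiAux
      fun_prop
    exact (hcont.tendsto _).comp
      (hx.prodMk_nhds (hy.prodMk_nhds (hu.prodMk_nhds hw)))
  have hev : (fun t : ℝ => phiAux l1 l2 l3 l4 m1 m2 m3 m4 a b c d e f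
      ((1 + cm * t) ^ ((1:ℝ)/3) / (1 + cl * t) ^ ((1:ℝ)/3),
       (1 + cl * t) ^ ((1:ℝ)/3) / (1 + cm * t) ^ ((1:ℝ)/3),
       ((1 + cl * t) ^ ((1:ℝ)/3))⁻¹, ((1 + cm * t) ^ ((1:ℝ)/3))⁻¹)) =ᶠ[atTop] (fun t : ℝ =>
        ((Ab t + b ^ 2 * Bb t + c ^ 2 * Cb t - A t) / A t) ^ 2 +
        ((B t - Bb t) / B t) ^ 2 +
        ((C t - Cb t - a ^ 2 * Bb t) / C t) ^ 2 +
        ((d ^ 2 * Ab t + e ^ 2 * Bb t + f ^ 2 * Cb t + Db t - D t) / D t) ^ 2 +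
        2 * (b * Bb t) ^ 2 / (A t * B t) +
        2 * (b * Bb t * a + c * Cb t) ^ 2 / (A t * C t) +
        2 * (d * Ab t + b * Bb t * e + c * Cb t * f) ^ 2 / (A t * D t) +
        2 * (a * Bb t) ^ 2 / (B t * C t) +
        2 * (e * Bb t) ^ 2 / (B t * D t) +
        2 * (a * Bb t * e + f * Cb t) ^ 2 / (C t * D t)) := by
    filter_upwards [eventually_ge_atTop 0] with t ht
    have h1 : (0:ℝ) < 1 + cl * t := by nlinarith
    have h2 : (0:ℝ) < 1 + cm * t := by nlinarith
    have hargl : 3 * l2 * t / (l1 * l4) = cl * t := by rw [hcl_def]; ring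
    have hargm : 3 * m2 * t / (m1 * m4) = cm * t := by rw [hcm_def]; ring
    have hBp : (1 + cl * t) ^ (-(1:ℝ)/3) = ((1 + cl * t) ^ ((1:ℝ)/3))⁻¹ := by
      rw [neg_div, Real.rpow_neg h1.le]
    have hBq : (1 + cm * t) ^ (-(1:ℝ)/3) = ((1 + cm * t) ^ ((1:ℝ)/3))⁻¹ := by
      rw [neg_div, Real.rpow_neg h2.le]
    rw [hA t, hB t, hC t, hD t, hAb t, hBb t, hCb t, hDb t, hargl, hargm, hBp, hBq]
    simp only [phiAux]
    set P : ℝ := (1 + cl * t) ^ ((1:ℝ)/3) with hP_def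
    set Q : ℝ := (1 + cm * t) ^ ((1:ℝ)/3) with hQ_def
    have hPt : 0 < P := Real.rpow_pos_of_pos h1 _
    have hQt : 0 < Q := Real.rpow_pos_of_pos h2 _
    have hPne := hPt.ne'
    have hQne := hQt.ne'
    field_simp
  have Htend : Tendsto (fun t : ℝ =>
        ((Ab t + b ^ 2 * Bb t + c ^ 2 * Cb t - A t) / A t) ^ 2 +
        ((B t - Bb t) / B t) ^ 2 +
        ((C t - Cb t - a ^ 2 * Bb t) / C t) ^ 2 +
        ((d ^ 2 * Ab t + e ^ 2 * Bb t + f ^ 2 * Cb t + Db t - D t) / D t) ^ 2 +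
        2 * (b * Bb t) ^ 2 / (A t * B t) +
        2 * (b * Bb t * a + c * Cb t) ^ 2 / (A t * C t) +
        2 * (d * Ab t + b * Bb t * e + c * Cb t * f) ^ 2 / (A t * D t) +
        2 * (a * Bb t) ^ 2 / (B t * C t) +
        2 * (e * Bb t) ^ 2 / (B t * D t) +
        2 * (a * Bb t * e + f * Cb t) ^ 2 / (C t * D t))
      atTop (nhds (phiAux l1 l2 l3 l4 m1 m2 m3 m4 a b c d e f (s, s⁻¹, 0, 0))) :=
    hT.congr' hev
  have hLval : phiAux l1 l2 l3 l4 m1 m2 m3 m4 a b c d e f (s, s⁻¹, 0, 0) =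
      (m1 / l1 * s - 1) ^ 2 + (1 - m2 / l2 * s⁻¹) ^ 2 + ((l3 - m3) / l3) ^ 2 +
        (d ^ 2 * m1 / l4 * s + m4 / l4 * s - 1) ^ 2 + 2 * (d * m1 * s) ^ 2 / (l1 * l4) := by
    simp [phiAux]
  constructor
  · intro h
    have hL0 := tendsto_nhds_unique Htend h
    rw [hLval] at hL0
    have n1 : (0:ℝ) ≤ (m1 / l1 * s - 1) ^ 2 := sq_nonneg _
    have n2 : (0:ℝ) ≤ (1 - m2 / l2 * s⁻¹) ^ 2 := sq_nonneg _
    have n3 : (0:ℝ) ≤ ((l3 - m3) / l3) ^ 2 := sq_nonneg _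
    have n4 : (0:ℝ) ≤ (d ^ 2 * m1 / l4 * s + m4 / l4 * s - 1) ^ 2 := sq_nonneg _
    have n5 : (0:ℝ) ≤ 2 * (d * m1 * s) ^ 2 / (l1 * l4) := by positivity
    have e1 : m1 / l1 * s - 1 = 0 :=
      pow_eq_zero_iff two_ne_zero |>.1 (le_antisymm (by linarith) n1)
    have e2 : 1 - m2 / l2 * s⁻¹ = 0 :=
      pow_eq_zero_iff two_ne_zero |>.1 (le_antisymm (by linarith) n2)
    have e3 : (l3 - m3) / l3 = 0 :=
      pow_eq_zero_iff two_ne_zero |>.1 (le_antisymm (by linarith) n3)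
    have e4 : d ^ 2 * m1 / l4 * s + m4 / l4 * s - 1 = 0 :=
      pow_eq_zero_iff two_ne_zero |>.1 (le_antisymm (by linarith) n4)
    have e5 : 2 * (d * m1 * s) ^ 2 / (l1 * l4) = 0 := by linarith
    have hd : d = 0 := by
      have h5 : (d * m1 * s) ^ 2 = 0 := by
        rw [div_eq_zero_iff] at e5
        rcases e5 with e5 | e5
        · linarith
        · exact absurd e5 hl14.ne'
      have h6 := pow_eq_zero_iff two_ne_zero |>.1 h5
      rcases mul_eq_zero.1 h6 with h' | h'
      · rcases mul_eq_zero.1 h' with h'' | h''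
        · exact h''
        · exact absurd h'' hm1.ne'
      · exact absurd h' hs.ne'
    have hm3l3 : m3 = l3 := by
      rcases div_eq_zero_iff.1 e3 with h' | h'
      · linarith
      · exact absurd h' hl3.ne'
    refine ⟨hd, hm3l3, s⁻¹, inv_pos.2 hs, ?_, ?_, ?_⟩
    · have h' : m1 * s = l1 := by field_simp at e1; linarith
      field_simp
      linarith
    · rw [div_eq_mul_inv, inv_inv]
      have h' : m2 = l2 * s := by field_simp at e2; linarith
      linarith
    · rw [hd] at e4
      have h' : m4 * s = l4 := by field_simp at e4; linarith
      field_simp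
      linarith
  · rintro ⟨hd, hm3l3, k, hk, h1, h2, h4⟩
    have hsk : s = k⁻¹ := by
      have hr3 : cm / cl = (k⁻¹) ^ (3:ℕ) := by
        rw [hcm_def, hcl_def, h1, h2, h4]
        field_simp
      rw [hs_def, hr3, ← Real.rpow_natCast (k⁻¹) 3, ← Real.rpow_mul (by positivity)]
      norm_num
    have hL0 : phiAux l1 l2 l3 l4 m1 m2 m3 m4 a b c d e f (s, s⁻¹, 0, 0) = 0 := by
      rw [hLval, hsk, hd, hm3l3, h1, h2, h4]
      have hkne := hk.ne'
      field_simp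
      ring
    exact hL0 ▸ Htend
end

section
/- Let λ₁,λ₂,λ₃,λ₄ and λ̄₁,λ̄₂,λ̄₃,λ̄₄ be positive reals. Suppose A,B,C,D : [0,∞) → (0,∞) are differentiable and satisfy dA/dt = B/D, dB/dt = -B²/(AD), dC/dt = 0, dD/dt = 3 + B/A with A(0)=λ₁, B(0)=λ₂, C(0)=λ₃, D(0)=λ₄ (so that A(t)B(t) = λ₁λ₂ for all t), and suppose (as holds for these solutions) that A(t) → ∞ and D(t) → ∞ as t → ∞. Let Ā,B̄,C̄,D̄ satisfy the same ODE system with initial data λ̄₁,λ̄₂,λ̄₃,λ̄₄ and with Ā(t) → ∞, D̄(t) → ∞. Then ((A-Ā)/A)² + ((B-B̄)/B)² + ((C-C̄)/C)² + ((D-D̄)/D)² tends to 0 as t → ∞ if and only if λ̄₁λ̄₂ = λ₁λ₂ and λ̄₃ = λ₃ (with λ̄₄ arbitrary); in particular the quasi-convergence class [g]_α is exactly a 2-parameter family. -/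
open Filter Set

private lemma mono_aux {a : ℝ} {f f' : ℝ → ℝ}
    (hf : ∀ t ∈ Set.Ici a, HasDerivWithinAt f (f' t) (Set.Ici a) t)
    (h0 : ∀ t ∈ Set.Ici a, 0 ≤ f' t) : MonotoneOn f (Set.Ici a) := by
  apply monotoneOn_of_hasDerivWithinAt_nonneg (convex_Ici a)
    (fun t ht => (hf t ht).continuousWithinAt) (f' := f')
  · intro x hx
    rw [interior_Ici] at hx ⊢
    exact ((hf x (Set.mem_Ici.mpr (le_of_lt (Set.mem_Ioi.mp hx)))).hasDerivAt (Ici_mem_nhds (Set.mem_Ioi.mp hx))).hasDerivWithinAt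
  · intro x hx
    rw [interior_Ici] at hx
    exact h0 x (Set.mem_Ici.mpr (le_of_lt (Set.mem_Ioi.mp hx)))

private lemma const_aux {f : ℝ → ℝ}
    (hf : ∀ t ∈ Set.Ici (0:ℝ), HasDerivWithinAt f 0 (Set.Ici 0) t) :
    ∀ t ∈ Set.Ici (0:ℝ), f t = f 0 := by
  intro t ht
  have h1 := mono_aux (f' := fun _ => (0:ℝ)) hf (fun _ _ => le_refl 0)
  have h2 := mono_aux (f := fun t => -f t) (f' := fun _ => (0:ℝ))
      (fun t ht => by have h := (hf t ht).neg; rw [neg_zero] at h; exact h) (fun _ _ => le_refl 0)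
  have := h2 self_mem_Ici ht ht
  exact le_antisymm (by simpa using this) (h1 self_mem_Ici ht ht)

private lemma slope_lim {f f' : ℝ → ℝ} {L : ℝ}
    (hf : ∀ t ∈ Set.Ici (0:ℝ), HasDerivWithinAt f (f' t) (Set.Ici 0) t)
    (hlim : Filter.Tendsto f' Filter.atTop (nhds L)) :
    Filter.Tendsto (fun t => f t / t) Filter.atTop (nhds L) := by
  rw [Metric.tendsto_atTop] at hlim ⊢
  intro ε hε
  obtain ⟨T₀, hT₀⟩ := hlim (ε/3) (by positivity)
  set T := max T₀ 0 with hTdef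
  have hT0 : (0:ℝ) ≤ T := le_max_right _ _
  have hder : ∀ t ∈ Set.Ici T, HasDerivWithinAt f (f' t) (Set.Ici T) t :=
    fun t ht => (hf t (le_trans hT0 ht)).mono (Set.Ici_subset_Ici.mpr hT0)
  have hub : ∀ t ∈ Set.Ici T, f' t ≤ L + ε/3 := by
    intro t ht
    have := hT₀ t (le_trans (le_max_left _ _) ht)
    rw [Real.dist_eq] at this
    have := abs_lt.mp this
    linarith [this.2]
  have hlb : ∀ t ∈ Set.Ici T, L - ε/3 ≤ f' t := by
    intro t ht
    have := hT₀ t (le_trans (le_max_left _ _) ht)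
    rw [Real.dist_eq] at this
    have := abs_lt.mp this
    linarith [this.1]
  have m1 : MonotoneOn (fun t => f t - (L - ε/3) * t) (Set.Ici T) := by
    apply mono_aux (f' := fun t => f' t - (L - ε/3))
    · intro t ht
      have h := (hder t ht).sub (((hasDerivAt_id t).const_mul (L - ε/3)).hasDerivWithinAt)
      simp only [mul_one] at h
      exact h
    · intro t ht; linarith [hlb t ht]
  have m2 : MonotoneOn (fun t => (L + ε/3) * t - f t) (Set.Ici T) := by
    apply mono_aux (f' := fun t => (L + ε/3) - f' t)
    · intro t ht
      have h := (((hasDerivAt_id t).const_mul (L + ε/3)).hasDerivWithinAt).sub (hder t ht)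
      simp only [mul_one] at h
      exact h
    · intro t ht; linarith [hub t ht]
  have key : ∀ t, T ≤ t → |f t - L * t| ≤ |f T - L * T| + (ε/3) * t := by
    intro t ht
    have k1 := m1 self_mem_Ici ht ht
    have k2 := m2 self_mem_Ici ht ht
    simp only at k1 k2
    rw [abs_le]
    have hε3 : 0 < ε/3 := by positivity
    constructor
    · nlinarith [neg_abs_le (f T - L * T), mul_nonneg hε3.le hT0]
    · nlinarith [le_abs_self (f T - L * T), mul_nonneg hε3.le hT0]
  refine ⟨max T (max 1 (3 * |f T - L * T| / ε)), fun t ht => ?_⟩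
  have ht1 : (1:ℝ) ≤ t := le_trans (le_trans (le_max_left _ _) (le_max_right _ _)) ht
  have htT : T ≤ t := le_trans (le_max_left _ _) ht
  have htC : 3 * |f T - L * T| / ε ≤ t :=
    le_trans (le_trans (le_max_right _ _) (le_max_right _ _)) ht
  have ht0 : (0:ℝ) < t := lt_of_lt_of_le one_pos ht1
  have hk := key t htT
  rw [Real.dist_eq]
  have heq : f t / t - L = (f t - L * t)/t := by field_simp
  rw [heq, abs_div, abs_of_pos ht0, div_lt_iff₀ ht0]
  have hC : |f T - L * T| ≤ ε/3 * t := by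
    rw [div_le_iff₀ hε] at htC
    linarith
  nlinarith [mul_pos hε ht0]

private lemma ratio_lim {φ ψ φ' ψ' : ℝ → ℝ}
    (hφ : ∀ t ∈ Set.Ici (0:ℝ), HasDerivWithinAt φ (φ' t) (Set.Ici 0) t)
    (hψ : ∀ t ∈ Set.Ici (0:ℝ), HasDerivWithinAt ψ (ψ' t) (Set.Ici 0) t)
    (hφ'pos : ∀ t ∈ Set.Ici (0:ℝ), 0 ≤ φ' t)
    (hφlim : Filter.Tendsto φ Filter.atTop Filter.atTop)
    (hsmall : ∀ ε, 0 < ε → ∀ᶠ t in Filter.atTop, |ψ' t| ≤ ε * φ' t) :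
    Filter.Tendsto (fun t => ψ t / φ t) Filter.atTop (nhds 0) := by
  rw [Metric.tendsto_atTop]
  intro ε hε
  have hε3 : (0:ℝ) < ε/3 := by positivity
  obtain ⟨T₀, hT₀⟩ := Filter.eventually_atTop.mp (hsmall (ε/3) hε3)
  set T := max T₀ 0 with hTdef
  have hT0 : (0:ℝ) ≤ T := le_max_right _ _
  have hsm : ∀ t ∈ Set.Ici T, |ψ' t| ≤ (ε/3) * φ' t :=
    fun t ht => hT₀ t (le_trans (le_max_left _ _) ht)
  have hφd : ∀ t ∈ Set.Ici T, HasDerivWithinAt φ (φ' t) (Set.Ici T) t :=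
    fun t ht => (hφ t (le_trans hT0 ht)).mono (Set.Ici_subset_Ici.mpr hT0)
  have hψd : ∀ t ∈ Set.Ici T, HasDerivWithinAt ψ (ψ' t) (Set.Ici T) t :=
    fun t ht => (hψ t (le_trans hT0 ht)).mono (Set.Ici_subset_Ici.mpr hT0)
  have m1 : MonotoneOn (fun t => (ε/3) * φ t - ψ t) (Set.Ici T) := by
    apply mono_aux (f' := fun t => (ε/3) * φ' t - ψ' t)
    · intro t ht; exact ((hφd t ht).const_mul (ε/3)).sub (hψd t ht)
    · intro t ht; linarith [hsm t ht, le_abs_self (ψ' t)]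
  have m2 : MonotoneOn (fun t => (ε/3) * φ t + ψ t) (Set.Ici T) := by
    apply mono_aux (f' := fun t => (ε/3) * φ' t + ψ' t)
    · intro t ht; exact ((hφd t ht).const_mul (ε/3)).add (hψd t ht)
    · intro t ht; linarith [hsm t ht, neg_abs_le (ψ' t)]
  set Cψ := |ψ T| + (ε/3) * |φ T| with hCdef
  have hCnn : 0 ≤ Cψ := by positivity
  have key : ∀ t, T ≤ t → |ψ t| ≤ (ε/3) * φ t + Cψ := by
    intro t ht
    have k1 := m1 self_mem_Ici ht ht
    have k2 := m2 self_mem_Ici ht ht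
    simp only at k1 k2
    rw [abs_le]
    constructor
    · nlinarith [le_abs_self (ψ T), neg_abs_le (ψ T), le_abs_self (φ T), neg_abs_le (φ T)]
    · nlinarith [le_abs_self (ψ T), neg_abs_le (ψ T), le_abs_self (φ T), neg_abs_le (φ T)]
  clear_value Cψ
  obtain ⟨T₁, hT₁⟩ := Filter.eventually_atTop.mp
    (Filter.tendsto_atTop.mp hφlim (max 1 (3 * Cψ / ε)))
  refine ⟨max T T₁, fun t ht => ?_⟩
  have htT : T ≤ t := le_trans (le_max_left _ _) ht
  have hφt := hT₁ t (le_trans (le_max_right _ _) ht)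
  have hφ1 : (1:ℝ) ≤ φ t := le_trans (le_max_left _ _) hφt
  have hφ0 : (0:ℝ) < φ t := lt_of_lt_of_le one_pos hφ1
  have hφC : 3 * Cψ / ε ≤ φ t := le_trans (le_max_right _ _) hφt
  have hC2 : Cψ ≤ ε/3 * φ t := by
    rw [div_le_iff₀ hε] at hφC
    have hcomm : φ t * ε = ε * φ t := mul_comm _ _
    linarith
  have hk := key t htT
  rw [Real.dist_eq, sub_zero, abs_div, abs_of_pos hφ0, div_lt_iff₀ hφ0]
  nlinarith [mul_pos hε hφ0]

private lemma Dlim3 {k : ℝ} {A B D : ℝ → ℝ}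
    (hApos : ∀ t ∈ Set.Ici (0:ℝ), 0 < A t)
    (hD : ∀ t ∈ Set.Ici (0:ℝ), HasDerivWithinAt D (3 + B t / A t) (Set.Ici 0) t)
    (hAB : ∀ t ∈ Set.Ici (0:ℝ), A t * B t = k)
    (hAlim : Filter.Tendsto A Filter.atTop Filter.atTop) :
    Filter.Tendsto (fun t => D t / t) Filter.atTop (nhds 3) := by
  have hsq : Filter.Tendsto (fun t => (A t)^2) Filter.atTop Filter.atTop := by
    refine (hAlim.atTop_mul_atTop₀ hAlim).congr (fun t => ?_)
    ring
  have h1 : Filter.Tendsto (fun t => k / (A t)^2) Filter.atTop (nhds 0) :=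
    Filter.Tendsto.div_atTop tendsto_const_nhds hsq
  have h2 : ∀ᶠ t in Filter.atTop, 3 + k/(A t)^2 = 3 + B t / A t := by
    filter_upwards [Filter.eventually_ge_atTop (0:ℝ)] with t ht
    have hA0 := hApos t ht
    have hk := hAB t ht
    field_simp
    nlinarith
  have hquot : Filter.Tendsto (fun t => 3 + B t / A t) Filter.atTop (nhds 3) := by
    have := (tendsto_const_nhds (x := (3:ℝ)) (f := Filter.atTop (α := ℝ))).add h1
    rw [add_zero] at this
    exact this.congr' h2
  exact slope_lim hD hquot

private lemma sq_to_val {f : ℝ → ℝ}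
    (hf : Filter.Tendsto (fun t => (f t)^2) Filter.atTop (nhds 0)) :
    Filter.Tendsto f Filter.atTop (nhds 0) := by
  rw [tendsto_zero_iff_abs_tendsto_zero]
  have h := hf.sqrt
  rw [Real.sqrt_zero] at h
  exact h.congr (fun t => Real.sqrt_sq_eq_abs (f t))

/-- class A5: for solutions of the A5 Ricci-flow ODE system,
quasi-convergence in the same frame holds iff `λ̄₁λ̄₂ = λ₁λ₂` and `λ̄₃ = λ₃`;
`[g]_α` is a 2-parameter family. -/
theorem stmt_5 (l1 l2 l3 l4 m1 m2 m3 m4 : ℝ)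
    (hl1 : 0 < l1) (hl2 : 0 < l2) (hl3 : 0 < l3) (hl4 : 0 < l4)
    (hm1 : 0 < m1) (hm2 : 0 < m2) (hm3 : 0 < m3) (hm4 : 0 < m4)
    (A B C D Ab Bb Cb Db : ℝ → ℝ)
    (hApos : ∀ t ∈ Set.Ici (0:ℝ), 0 < A t) (hBpos : ∀ t ∈ Set.Ici (0:ℝ), 0 < B t)
    (hCpos : ∀ t ∈ Set.Ici (0:ℝ), 0 < C t) (hDpos : ∀ t ∈ Set.Ici (0:ℝ), 0 < D t)
    (hAbpos : ∀ t ∈ Set.Ici (0:ℝ), 0 < Ab t) (hBbpos : ∀ t ∈ Set.Ici (0:ℝ), 0 < Bb t)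
    (hCbpos : ∀ t ∈ Set.Ici (0:ℝ), 0 < Cb t) (hDbpos : ∀ t ∈ Set.Ici (0:ℝ), 0 < Db t)
    (hA : ∀ t ∈ Set.Ici (0:ℝ), HasDerivWithinAt A (B t / D t) (Set.Ici 0) t)
    (hB : ∀ t ∈ Set.Ici (0:ℝ),
      HasDerivWithinAt B (-(B t) ^ 2 / (A t * D t)) (Set.Ici 0) t)
    (hC : ∀ t ∈ Set.Ici (0:ℝ), HasDerivWithinAt C 0 (Set.Ici 0) t)
    (hD : ∀ t ∈ Set.Ici (0:ℝ), HasDerivWithinAt D (3 + B t / A t) (Set.Ici 0) t)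
    (hA0 : A 0 = l1) (hB0 : B 0 = l2) (hC0 : C 0 = l3) (hD0 : D 0 = l4)
    (hAB : ∀ t ∈ Set.Ici (0:ℝ), A t * B t = l1 * l2)
    (hAlim : Filter.Tendsto A Filter.atTop Filter.atTop)
    (hDlim : Filter.Tendsto D Filter.atTop Filter.atTop)
    (hAb : ∀ t ∈ Set.Ici (0:ℝ), HasDerivWithinAt Ab (Bb t / Db t) (Set.Ici 0) t)
    (hBb : ∀ t ∈ Set.Ici (0:ℝ),
      HasDerivWithinAt Bb (-(Bb t) ^ 2 / (Ab t * Db t)) (Set.Ici 0) t)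
    (hCb : ∀ t ∈ Set.Ici (0:ℝ), HasDerivWithinAt Cb 0 (Set.Ici 0) t)
    (hDb : ∀ t ∈ Set.Ici (0:ℝ), HasDerivWithinAt Db (3 + Bb t / Ab t) (Set.Ici 0) t)
    (hAb0 : Ab 0 = m1) (hBb0 : Bb 0 = m2) (hCb0 : Cb 0 = m3) (hDb0 : Db 0 = m4)
    (hAbB : ∀ t ∈ Set.Ici (0:ℝ), Ab t * Bb t = m1 * m2)
    (hAblim : Filter.Tendsto Ab Filter.atTop Filter.atTop)
    (hDblim : Filter.Tendsto Db Filter.atTop Filter.atTop) :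
    Filter.Tendsto (fun t : ℝ =>
        ((A t - Ab t) / A t) ^ 2 + ((B t - Bb t) / B t) ^ 2 +
        ((C t - Cb t) / C t) ^ 2 + ((D t - Db t) / D t) ^ 2)
      Filter.atTop (nhds 0) ↔ (m1 * m2 = l1 * l2 ∧ m3 = l3) := by
  have hCconst : ∀ t ∈ Set.Ici (0:ℝ), C t = l3 :=
    fun t ht => (const_aux hC t ht).trans hC0
  have hCbconst : ∀ t ∈ Set.Ici (0:ℝ), Cb t = m3 :=
    fun t ht => (const_aux hCb t ht).trans hCb0
  constructor
  · -- forward direction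
    intro hsum
    have hsq1 : Filter.Tendsto (fun t => ((A t - Ab t)/A t)^2) Filter.atTop (nhds 0) := by
      refine squeeze_zero (fun t => sq_nonneg _) (fun t => ?_) hsum
      nlinarith [sq_nonneg ((B t - Bb t)/B t), sq_nonneg ((C t - Cb t)/C t),
        sq_nonneg ((D t - Db t)/D t)]
    have hsq2 : Filter.Tendsto (fun t => ((B t - Bb t)/B t)^2) Filter.atTop (nhds 0) := by
      refine squeeze_zero (fun t => sq_nonneg _) (fun t => ?_) hsum
      nlinarith [sq_nonneg ((A t - Ab t)/A t), sq_nonneg ((C t - Cb t)/C t),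
        sq_nonneg ((D t - Db t)/D t)]
    have hsq3 : Filter.Tendsto (fun t => ((C t - Cb t)/C t)^2) Filter.atTop (nhds 0) := by
      refine squeeze_zero (fun t => sq_nonneg _) (fun t => ?_) hsum
      nlinarith [sq_nonneg ((A t - Ab t)/A t), sq_nonneg ((B t - Bb t)/B t),
        sq_nonneg ((D t - Db t)/D t)]
    have hv1 := sq_to_val hsq1
    have hv2 := sq_to_val hsq2
    have hv3 := sq_to_val hsq3
    have hm3l3 : m3 = l3 := by
      have hce : (fun t => (C t - Cb t)/C t) =ᶠ[Filter.atTop]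
          (fun _ => (l3 - m3)/l3) := by
        filter_upwards [Filter.eventually_ge_atTop (0:ℝ)] with t ht
        rw [hCconst t ht, hCbconst t ht]
      have hcc : Filter.Tendsto (fun _ : ℝ => (l3 - m3)/l3) Filter.atTop (nhds 0) :=
        hv3.congr' hce
      have h0 : (l3 - m3)/l3 = 0 := tendsto_nhds_unique tendsto_const_nhds hcc
      have := (div_eq_zero_iff.mp h0).resolve_right hl3.ne'
      linarith
    refine ⟨?_, hm3l3⟩
    have hprod : Filter.Tendsto
        (fun t => (1 - (A t - Ab t)/A t) * (1 - (B t - Bb t)/B t))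
        Filter.atTop (nhds 1) := by
      have h := ((tendsto_const_nhds (x := (1:ℝ))
        (f := Filter.atTop (α := ℝ))).sub hv1).mul
        ((tendsto_const_nhds (x := (1:ℝ)) (f := Filter.atTop (α := ℝ))).sub hv2)
      norm_num at h
      exact h
    have hpe : (fun t => (1 - (A t - Ab t)/A t) * (1 - (B t - Bb t)/B t))
        =ᶠ[Filter.atTop] (fun _ => (m1*m2)/(l1*l2)) := by
      filter_upwards [Filter.eventually_ge_atTop (0:ℝ)] with t ht
      have hA0 := (hApos t ht).ne'
      have hB0 := (hBpos t ht).ne'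
      have e1 : 1 - (A t - Ab t)/A t = Ab t / A t := by field_simp; ring
      have e2 : 1 - (B t - Bb t)/B t = Bb t / B t := by field_simp; ring
      rw [e1, e2, div_mul_div_comm, hAB t ht, hAbB t ht]
    have h1 : ((m1*m2)/(l1*l2) : ℝ) = 1 :=
      tendsto_nhds_unique tendsto_const_nhds (hprod.congr' hpe)
    have hll : (l1*l2 : ℝ) ≠ 0 := by positivity
    exact (div_eq_one_iff_eq hll).mp h1
  · -- backward direction
    rintro ⟨hprod, hm3l3⟩
    -- D / t → 3 for both
    have hD3 := Dlim3 hApos hD hAB hAlim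
    have hDb3 := Dlim3 hAbpos hDb hAbB hAblim
    have hDratio : Filter.Tendsto (fun t => D t / Db t) Filter.atTop (nhds 1) := by
      have h := hD3.div hDb3 (by norm_num)
      norm_num at h
      refine h.congr' ?_
      filter_upwards [Filter.eventually_gt_atTop (0:ℝ)] with t ht
      have h1 : t ≠ 0 := ht.ne'
      have h2 : Db t ≠ 0 := (hDbpos t ht.le).ne'
      rw [Pi.div_apply]
      field_simp
    have hDbratio : Filter.Tendsto (fun t => Db t / D t) Filter.atTop (nhds 1) := by
      have h := hDb3.div hD3 (by norm_num)
      norm_num at h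
      refine h.congr' ?_
      filter_upwards [Filter.eventually_gt_atTop (0:ℝ)] with t ht
      have h1 : t ≠ 0 := ht.ne'
      have h2 : D t ≠ 0 := (hDpos t ht.le).ne'
      rw [Pi.div_apply]
      field_simp
    -- derivative of A^2 and Ab^2
    set k := l1 * l2 with hkdef
    have hkpos : 0 < k := by positivity
    have hAbB' : ∀ t ∈ Set.Ici (0:ℝ), Ab t * Bb t = k := by
      intro t ht; rw [hAbB t ht, hprod]
    have hφd : ∀ t ∈ Set.Ici (0:ℝ),
        HasDerivWithinAt (fun s => (A s)^2) (2*k / D t) (Set.Ici 0) t := by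
      intro t ht
      have h := (hA t ht).pow 2
      convert h using 1
      case e'_4 => rfl
      case e'_5 => rfl
      case e'_8 => rfl
      have hab := hAB t ht
      push_cast
      rw [← hab]
      ring
    have hφbd : ∀ t ∈ Set.Ici (0:ℝ),
        HasDerivWithinAt (fun s => (Ab s)^2) (2*k / Db t) (Set.Ici 0) t := by
      intro t ht
      have h := (hAb t ht).pow 2
      convert h using 1
      case e'_4 => rfl
      case e'_5 => rfl
      case e'_8 => rfl
      have hab := hAbB' t ht
      push_cast
      rw [← hab]
      ring
    have hψd : ∀ t ∈ Set.Ici (0:ℝ),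
        HasDerivWithinAt (fun s => (A s)^2 - (Ab s)^2)
          (2*k / D t - 2*k / Db t) (Set.Ici 0) t :=
      fun t ht => (hφd t ht).sub (hφbd t ht)
    have hφ'nn : ∀ t ∈ Set.Ici (0:ℝ), 0 ≤ 2*k / D t := by
      intro t ht
      have := hDpos t ht
      positivity
    have hφlim : Filter.Tendsto (fun t => (A t)^2) Filter.atTop Filter.atTop :=
      (hAlim.atTop_mul_atTop₀ hAlim).congr (fun t => by ring)
    have hsmall : ∀ ε, 0 < ε → ∀ᶠ t in Filter.atTop,
        |2*k / D t - 2*k / Db t| ≤ ε * (2*k / D t) := by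
      intro ε hε
      have h1 : ∀ᶠ t in Filter.atTop, D t / Db t ∈ Metric.ball (1:ℝ) ε :=
        hDratio (Metric.ball_mem_nhds (1:ℝ) hε)
      filter_upwards [h1, Filter.eventually_ge_atTop (0:ℝ)] with t hdist ht
      have hDp := hDpos t ht
      have hDbp := hDbpos t ht
      rw [Metric.mem_ball, Real.dist_eq] at hdist
      have habs : |1 - D t / Db t| ≤ ε := by
        rw [abs_sub_comm]; exact hdist.le
      have heq : 2*k / D t - 2*k / Db t = (2*k / D t) * (1 - D t / Db t) := by
        field_simp
      rw [heq, abs_mul, abs_of_pos (by positivity : (0:ℝ) < 2*k / D t)]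
      calc (2*k / D t) * |1 - D t / Db t| ≤ (2*k / D t) * ε :=
            mul_le_mul_of_nonneg_left habs (by positivity)
        _ = ε * (2*k / D t) := mul_comm _ _
    have hψφ := ratio_lim hφd hψd hφ'nn hφlim hsmall
    -- Ab/A → 1
    have hAr : Filter.Tendsto (fun t => Ab t / A t) Filter.atTop (nhds 1) := by
      have h1 : Filter.Tendsto (fun t => (Ab t)^2/(A t)^2) Filter.atTop (nhds 1) := by
        have h := (tendsto_const_nhds (x := (1:ℝ)) (f := Filter.atTop (α := ℝ))).sub hψφ
        norm_num at h
        refine h.congr' ?_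
        filter_upwards [Filter.eventually_ge_atTop (0:ℝ)] with t ht
        have hA0 : A t ≠ 0 := (hApos t ht).ne'
        field_simp
        ring
      have h2 := h1.sqrt
      rw [Real.sqrt_one] at h2
      refine h2.congr' ?_
      filter_upwards [Filter.eventually_ge_atTop (0:ℝ)] with t ht
      rw [← div_pow, Real.sqrt_sq (div_nonneg (hAbpos t ht).le (hApos t ht).le)]
    -- Bb/B → 1
    have hBr : Filter.Tendsto (fun t => Bb t / B t) Filter.atTop (nhds 1) := by
      have h := hAr.inv₀ one_ne_zero
      rw [inv_one] at h
      refine h.congr' ?_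
      filter_upwards [Filter.eventually_ge_atTop (0:ℝ)] with t ht
      rw [inv_div, div_eq_div_iff (hAbpos t ht).ne' (hBpos t ht).ne']
      have h2 := hAbB' t ht
      rw [hAB t ht, ← h2]
      ring
    -- the four terms
    have hT1 : Filter.Tendsto (fun t => (A t - Ab t)/A t) Filter.atTop (nhds 0) := by
      have h := (tendsto_const_nhds (x := (1:ℝ)) (f := Filter.atTop (α := ℝ))).sub hAr
      norm_num at h
      refine h.congr' ?_
      filter_upwards [Filter.eventually_ge_atTop (0:ℝ)] with t ht
      have hA0 : A t ≠ 0 := (hApos t ht).ne'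
      field_simp
    have hT2 : Filter.Tendsto (fun t => (B t - Bb t)/B t) Filter.atTop (nhds 0) := by
      have h := (tendsto_const_nhds (x := (1:ℝ)) (f := Filter.atTop (α := ℝ))).sub hBr
      norm_num at h
      refine h.congr' ?_
      filter_upwards [Filter.eventually_ge_atTop (0:ℝ)] with t ht
      have hB0 : B t ≠ 0 := (hBpos t ht).ne'
      field_simp
    have hT3 : Filter.Tendsto (fun t => (C t - Cb t)/C t) Filter.atTop (nhds 0) := by
      refine (tendsto_const_nhds (x := (0:ℝ)) (f := Filter.atTop (α := ℝ))).congr' ?_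
      filter_upwards [Filter.eventually_ge_atTop (0:ℝ)] with t ht
      rw [hCconst t ht, hCbconst t ht, hm3l3]
      norm_num
    have hT4 : Filter.Tendsto (fun t => (D t - Db t)/D t) Filter.atTop (nhds 0) := by
      have h := (tendsto_const_nhds (x := (1:ℝ)) (f := Filter.atTop (α := ℝ))).sub hDbratio
      norm_num at h
      refine h.congr' ?_
      filter_upwards [Filter.eventually_ge_atTop (0:ℝ)] with t ht
      have hD0 : D t ≠ 0 := (hDpos t ht).ne'
      field_simp
    have hS := (((hT1.pow 2).add (hT2.pow 2)).add (hT3.pow 2)).add (hT4.pow 2)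
    norm_num at hS
    exact hS
end

section
/- Let λ₁,λ₂,λ₃,λ₄ and λ̄₁,λ̄₂,λ̄₃,λ̄₄ be positive reals; set E₀ = λ₂/(λ₁λ₄), F₀ = λ₃/(λ₂λ₄), Ē₀ = λ̄₂/(λ̄₁λ̄₄), F̄₀ = λ̄₃/(λ̄₂λ̄₄). For t ≥ 0 define A(t)=λ₁(3E₀t+1)^{1/3}, B(t)=λ₂(3E₀t+1)^{-1/3}(3F₀t+1)^{1/3}, C(t)=λ₃(3F₀t+1)^{-1/3}, D(t)=λ₄(3E₀t+1)^{1/3}(3F₀t+1)^{1/3}, and define Ā,B̄,C̄,D̄ by the same formulas with λ̄ᵢ, Ē₀, F̄₀. Then ((A-Ā)/A)² + ((B-B̄)/B)² + ((C-C̄)/C)² + ((D-D̄)/D)² tends to 0 as t → ∞ if and only if (λ̄₁/λ₁)(Ē₀/E₀)^{1/3} = 1, (λ̄₂/λ₂)(E₀/Ē₀)^{1/3}(F̄₀/F₀)^{1/3} = 1, (λ̄₃/λ₃)(F₀/F̄₀)^{1/3} = 1, and (λ̄₄/λ₄)(Ē₀/E₀)^{1/3}(F̄₀/F₀)^{1/3}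 = 1; in particular any two of λ̄₁,λ̄₂,λ̄₃,λ̄₄ may be chosen freely and the other two are then determined, so the quasi-convergence class [g]_α is exactly a 2-parameter family. -/
open Filter Real

private lemma ratT (P Q : ℝ) (hP : 0 < P) (hQ : 0 < Q) :
    Tendsto (fun t : ℝ => (3*P*t+1) ^ ((1:ℝ)/3) / (3*Q*t+1) ^ ((1:ℝ)/3))
      atTop (nhds ((P/Q) ^ ((1:ℝ)/3))) := by
  have h2 : Tendsto (fun t : ℝ => (3*P + t⁻¹)/(3*Q + t⁻¹)) atTop (nhds ((3*P + 0)/(3*Q + 0))) :=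
    Tendsto.div (tendsto_const_nhds.add tendsto_inv_atTop_zero)
      (tendsto_const_nhds.add tendsto_inv_atTop_zero) (by positivity)
  have h1 : Tendsto (fun t : ℝ => (3*P*t+1)/(3*Q*t+1)) atTop (nhds (P/Q)) := by
    have he : (fun t : ℝ => (3*P + t⁻¹)/(3*Q + t⁻¹)) =ᶠ[atTop]
        (fun t : ℝ => (3*P*t+1)/(3*Q*t+1)) := by
      filter_upwards [eventually_gt_atTop 0] with t ht
      have ht' : t ≠ 0 := ne_of_gt ht
      have hq : 3*Q*t+1 ≠ 0 := by positivity
      have hq' : 3*Q + t⁻¹ ≠ 0 := by positivity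
      field_simp
      try ring
    have : (3*P + 0)/(3*Q + 0) = P/Q := by
      rw [add_zero, add_zero, mul_div_mul_left _ _ (by norm_num : (3:ℝ) ≠ 0)]
    rw [this] at h2
    exact h2.congr' he
  have h3 := h1.rpow_const (p := (1:ℝ)/3) (Or.inr (by norm_num))
  refine h3.congr' ?_
  filter_upwards [eventually_ge_atTop 0] with t ht
  have hp : (0:ℝ) ≤ 3*P*t+1 := by positivity
  have hq : (0:ℝ) ≤ 3*Q*t+1 := by positivity
  rw [Real.div_rpow hp hq]

private lemma ratT' (P Q : ℝ) (hP : 0 < P) (hQ : 0 < Q) :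
    Tendsto (fun t : ℝ => (3*P*t+1) ^ (-(1:ℝ)/3) / (3*Q*t+1) ^ (-(1:ℝ)/3))
      atTop (nhds ((Q/P) ^ ((1:ℝ)/3))) := by
  refine (ratT Q P hQ hP).congr' ?_
  filter_upwards [eventually_ge_atTop 0] with t ht
  have hp : (0:ℝ) ≤ 3*P*t+1 := by positivity
  have hq : (0:ℝ) ≤ 3*Q*t+1 := by positivity
  rw [neg_div, Real.rpow_neg hp, Real.rpow_neg hq, inv_div_inv]

/-- class A6: quasi-convergence of diagonal metrics in the same
frame holds iff the four displayed relations among the initial data hold;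
`[g]_α` is a 2-parameter family. -/
theorem stmt_7 (l1 l2 l3 l4 m1 m2 m3 m4 : ℝ)
    (hl1 : 0 < l1) (hl2 : 0 < l2) (hl3 : 0 < l3) (hl4 : 0 < l4)
    (hm1 : 0 < m1) (hm2 : 0 < m2) (hm3 : 0 < m3) (hm4 : 0 < m4)
    (E0 F0 Eb0 Fb0 : ℝ)
    (hE0 : E0 = l2 / (l1 * l4)) (hF0 : F0 = l3 / (l2 * l4))
    (hEb0 : Eb0 = m2 / (m1 * m4)) (hFb0 : Fb0 = m3 / (m2 * m4))
    (A B C D Ab Bb Cb Db : ℝ → ℝ)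
    (hA : ∀ t : ℝ, A t = l1 * (3 * E0 * t + 1) ^ ((1:ℝ)/3))
    (hB : ∀ t : ℝ, B t = l2 * (3 * E0 * t + 1) ^ (-(1:ℝ)/3) * (3 * F0 * t + 1) ^ ((1:ℝ)/3))
    (hC : ∀ t : ℝ, C t = l3 * (3 * F0 * t + 1) ^ (-(1:ℝ)/3))
    (hD : ∀ t : ℝ, D t = l4 * (3 * E0 * t + 1) ^ ((1:ℝ)/3) * (3 * F0 * t + 1) ^ ((1:ℝ)/3))
    (hAb : ∀ t : ℝ, Ab t = m1 * (3 * Eb0 * t + 1) ^ ((1:ℝ)/3))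
    (hBb : ∀ t : ℝ, Bb t = m2 * (3 * Eb0 * t + 1) ^ (-(1:ℝ)/3) * (3 * Fb0 * t + 1) ^ ((1:ℝ)/3))
    (hCb : ∀ t : ℝ, Cb t = m3 * (3 * Fb0 * t + 1) ^ (-(1:ℝ)/3))
    (hDb : ∀ t : ℝ, Db t = m4 * (3 * Eb0 * t + 1) ^ ((1:ℝ)/3) * (3 * Fb0 * t + 1) ^ ((1:ℝ)/3)) :
    Filter.Tendsto (fun t : ℝ =>
        ((A t - Ab t) / A t) ^ 2 + ((B t - Bb t) / B t) ^ 2 +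
        ((C t - Cb t) / C t) ^ 2 + ((D t - Db t) / D t) ^ 2)
      Filter.atTop (nhds 0) ↔
      ((m1 / l1) * (Eb0 / E0) ^ ((1:ℝ)/3) = 1 ∧
       (m2 / l2) * (E0 / Eb0) ^ ((1:ℝ)/3) * (Fb0 / F0) ^ ((1:ℝ)/3) = 1 ∧
       (m3 / l3) * (F0 / Fb0) ^ ((1:ℝ)/3) = 1 ∧
       (m4 / l4) * (Eb0 / E0) ^ ((1:ℝ)/3) * (Fb0 / F0) ^ ((1:ℝ)/3) = 1) := by
  have hE0p : 0 < E0 := hE0 ▸ div_pos hl2 (mul_pos hl1 hl4)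
  have hF0p : 0 < F0 := hF0 ▸ div_pos hl3 (mul_pos hl2 hl4)
  have hEb0p : 0 < Eb0 := hEb0 ▸ div_pos hm2 (mul_pos hm1 hm4)
  have hFb0p : 0 < Fb0 := hFb0 ▸ div_pos hm3 (mul_pos hm2 hm4)
  set LA := (m1 / l1) * (Eb0 / E0) ^ ((1:ℝ)/3) with hLA
  set LB := (m2 / l2) * (E0 / Eb0) ^ ((1:ℝ)/3) * (Fb0 / F0) ^ ((1:ℝ)/3) with hLB
  set LC := (m3 / l3) * (F0 / Fb0) ^ ((1:ℝ)/3) with hLC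
  set LD := (m4 / l4) * (Eb0 / E0) ^ ((1:ℝ)/3) * (Fb0 / F0) ^ ((1:ℝ)/3) with hLD
  have trA : Tendsto (fun t : ℝ => (A t - Ab t) / A t) atTop (nhds (1 - LA)) := by
    have h := (tendsto_const_nhds (x := m1/l1)).mul (ratT Eb0 E0 hEb0p hE0p)
    refine ((tendsto_const_nhds (x := (1:ℝ))).sub h).congr' ?_
    filter_upwards [eventually_ge_atTop 0] with t ht
    rw [hA, hAb]
    have hxE : (0:ℝ) < (3*E0*t+1) ^ ((1:ℝ)/3) := Real.rpow_pos_of_pos (by positivity) _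
    have h1 : l1 ≠ 0 := hl1.ne'
    have h2 : (3*E0*t+1) ^ ((1:ℝ)/3) ≠ 0 := hxE.ne'
    field_simp
    try ring
  have trB : Tendsto (fun t : ℝ => (B t - Bb t) / B t) atTop (nhds (1 - LB)) := by
    have h := ((tendsto_const_nhds (x := m2/l2)).mul (ratT' Eb0 E0 hEb0p hE0p)).mul
      (ratT Fb0 F0 hFb0p hF0p)
    refine ((tendsto_const_nhds (x := (1:ℝ))).sub h).congr' ?_
    filter_upwards [eventually_ge_atTop 0] with t ht
    rw [hB, hBb]
    have hxE : (0:ℝ) < (3*E0*t+1) ^ (-(1:ℝ)/3) := Real.rpow_pos_of_pos (by positivity) _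
    have hxF : (0:ℝ) < (3*F0*t+1) ^ ((1:ℝ)/3) := Real.rpow_pos_of_pos (by positivity) _
    have h1 : l2 ≠ 0 := hl2.ne'
    have h2 : (3*E0*t+1) ^ (-(1:ℝ)/3) ≠ 0 := hxE.ne'
    have h3 : (3*F0*t+1) ^ ((1:ℝ)/3) ≠ 0 := hxF.ne'
    field_simp
    try ring
  have trC : Tendsto (fun t : ℝ => (C t - Cb t) / C t) atTop (nhds (1 - LC)) := by
    have h := (tendsto_const_nhds (x := m3/l3)).mul (ratT' Fb0 F0 hFb0p hF0p)
    refine ((tendsto_const_nhds (x := (1:ℝ))).sub h).congr' ?_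
    filter_upwards [eventually_ge_atTop 0] with t ht
    rw [hC, hCb]
    have hxF : (0:ℝ) < (3*F0*t+1) ^ (-(1:ℝ)/3) := Real.rpow_pos_of_pos (by positivity) _
    have h1 : l3 ≠ 0 := hl3.ne'
    have h2 : (3*F0*t+1) ^ (-(1:ℝ)/3) ≠ 0 := hxF.ne'
    field_simp
    try ring
  have trD : Tendsto (fun t : ℝ => (D t - Db t) / D t) atTop (nhds (1 - LD)) := by
    have h := ((tendsto_const_nhds (x := m4/l4)).mul (ratT Eb0 E0 hEb0p hE0p)).mul
      (ratT Fb0 F0 hFb0p hF0p)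
    refine ((tendsto_const_nhds (x := (1:ℝ))).sub h).congr' ?_
    filter_upwards [eventually_ge_atTop 0] with t ht
    rw [hD, hDb]
    have hxE : (0:ℝ) < (3*E0*t+1) ^ ((1:ℝ)/3) := Real.rpow_pos_of_pos (by positivity) _
    have hxF : (0:ℝ) < (3*F0*t+1) ^ ((1:ℝ)/3) := Real.rpow_pos_of_pos (by positivity) _
    have h1 : l4 ≠ 0 := hl4.ne'
    have h2 : (3*E0*t+1) ^ ((1:ℝ)/3) ≠ 0 := hxE.ne'
    have h3 : (3*F0*t+1) ^ ((1:ℝ)/3) ≠ 0 := hxF.ne'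
    field_simp
    try ring
  have tsum : Tendsto (fun t : ℝ =>
      ((A t - Ab t) / A t) ^ 2 + ((B t - Bb t) / B t) ^ 2 +
      ((C t - Cb t) / C t) ^ 2 + ((D t - Db t) / D t) ^ 2) atTop
      (nhds ((1 - LA) ^ 2 + (1 - LB) ^ 2 + (1 - LC) ^ 2 + (1 - LD) ^ 2)) :=
    (((trA.pow 2).add (trB.pow 2)).add (trC.pow 2)).add (trD.pow 2)
  constructor
  · intro h
    have hS : (1 - LA) ^ 2 + (1 - LB) ^ 2 + (1 - LC) ^ 2 + (1 - LD) ^ 2 = 0 :=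
      tendsto_nhds_unique tsum h
    have sA : (1 - LA) ^ 2 = 0 := le_antisymm
      (by linarith [sq_nonneg (1 - LB), sq_nonneg (1 - LC), sq_nonneg (1 - LD)]) (sq_nonneg _)
    have sB : (1 - LB) ^ 2 = 0 := le_antisymm
      (by linarith [sq_nonneg (1 - LA), sq_nonneg (1 - LC), sq_nonneg (1 - LD)]) (sq_nonneg _)
    have sC : (1 - LC) ^ 2 = 0 := le_antisymm
      (by linarith [sq_nonneg (1 - LA), sq_nonneg (1 - LB), sq_nonneg (1 - LD)]) (sq_nonneg _)
    have sD : (1 - LD) ^ 2 = 0 := le_antisymm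
      (by linarith [sq_nonneg (1 - LA), sq_nonneg (1 - LB), sq_nonneg (1 - LC)]) (sq_nonneg _)
    have eA : LA = 1 := by
      have := (pow_eq_zero_iff two_ne_zero).mp sA; linarith [sub_eq_zero.mp this]
    have eB : LB = 1 := by
      have := (pow_eq_zero_iff two_ne_zero).mp sB; linarith [sub_eq_zero.mp this]
    have eC : LC = 1 := by
      have := (pow_eq_zero_iff two_ne_zero).mp sC; linarith [sub_eq_zero.mp this]
    have eD : LD = 1 := by
      have := (pow_eq_zero_iff two_ne_zero).mp sD; linarith [sub_eq_zero.mp this]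
    exact ⟨eA, eB, eC, eD⟩
  · rintro ⟨eA, eB, eC, eD⟩
    have : (1 - LA) ^ 2 + (1 - LB) ^ 2 + (1 - LC) ^ 2 + (1 - LD) ^ 2 = 0 := by
      rw [eA, eB, eC, eD]; ring
    exact this ▸ tsum
end

section
/- Let λ₁,λ₂,λ₃,λ₄ and λ̄₁,λ̄₂,λ̄₃,λ̄₄ be positive reals, set E₀ = λ₂/(λ₁λ₄), F₀ = λ₃/(λ₂λ₄), Ē₀ = λ̄₂/(λ̄₁λ̄₄), F̄₀ = λ̄₃/(λ̄₂λ̄₄), and let a,b,c,d,e be real numbers. For t ≥ 0 define A(t)=λ₁(3E₀t+1)^{1/3}, B(t)=λ₂(3E₀t+1)^{-1/3}(3F₀t+1)^{1/3}, C(t)=λ₃(3F₀t+1)^{-1/3}, D(t)=λ₄(3E₀t+1)^{1/3}(3F₀t+1)^{1/3}, and define Ā,B̄,C̄,D̄ by the same formulas with λ̄ᵢ, Ē₀, F̄₀. Then the quantity ((A-Ā-a²B̄-e²C̄)/A)² + ((B-B̄-a²C̄)/B)² + ((C-C̄)/C)² + ((b²Ā+c²B̄+d²C̄+D̄-D)/D)²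 + 2(aB̄+aeC̄)²/(AB) + 2(eC̄)²/(AC) + 2(bĀ+acB̄+deC̄)²/(AD) + 2(aC̄)²/(BC) + 2(cB̄+adC̄)²/(BD) + 2(dC̄)²/(CD) tends to 0 as t → ∞ if and only if (λ̄₁/λ₁)(Ē₀/E₀)^{1/3} = 1, (λ̄₂/λ₂)(E₀/Ē₀)^{1/3}(F̄₀/F₀)^{1/3} = 1, (λ̄₃/λ₃)(F₀/F̄₀)^{1/3} = 1, and (λ̄₄/λ₄)(Ē₀/E₀)^{1/3}(F̄₀/F₀)^{1/3} = 1, for every choice of a,b,c,d,e; in particular the quasi-convergence class [g] is exactly a 2-parameter family. -/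
open Filter Real

set_option maxHeartbeats 8000000 in
/-- class A6, different frames: quasi-convergence holds iff the
four displayed relations among the initial data hold, for every choice of
`a,b,c,d,e`; `[g]` is a 2-parameter family. -/
theorem stmt_8 (l1 l2 l3 l4 m1 m2 m3 m4 a b c d e : ℝ)
    (hl1 : 0 < l1) (hl2 : 0 < l2) (hl3 : 0 < l3) (hl4 : 0 < l4)
    (hm1 : 0 < m1) (hm2 : 0 < m2) (hm3 : 0 < m3) (hm4 : 0 < m4)
    (E0 F0 Eb0 Fb0 : ℝ)
    (hE0 : E0 = l2 / (l1 * l4)) (hF0 : F0 = l3 / (l2 * l4))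
    (hEb0 : Eb0 = m2 / (m1 * m4)) (hFb0 : Fb0 = m3 / (m2 * m4))
    (A B C D Ab Bb Cb Db : ℝ → ℝ)
    (hA : ∀ t : ℝ, A t = l1 * (3 * E0 * t + 1) ^ ((1:ℝ)/3))
    (hB : ∀ t : ℝ, B t = l2 * (3 * E0 * t + 1) ^ (-(1:ℝ)/3) * (3 * F0 * t + 1) ^ ((1:ℝ)/3))
    (hC : ∀ t : ℝ, C t = l3 * (3 * F0 * t + 1) ^ (-(1:ℝ)/3))
    (hD : ∀ t : ℝ, D t = l4 * (3 * E0 * t + 1) ^ ((1:ℝ)/3) * (3 * F0 * t + 1) ^ ((1:ℝ)/3))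
    (hAb : ∀ t : ℝ, Ab t = m1 * (3 * Eb0 * t + 1) ^ ((1:ℝ)/3))
    (hBb : ∀ t : ℝ, Bb t = m2 * (3 * Eb0 * t + 1) ^ (-(1:ℝ)/3) * (3 * Fb0 * t + 1) ^ ((1:ℝ)/3))
    (hCb : ∀ t : ℝ, Cb t = m3 * (3 * Fb0 * t + 1) ^ (-(1:ℝ)/3))
    (hDb : ∀ t : ℝ, Db t = m4 * (3 * Eb0 * t + 1) ^ ((1:ℝ)/3) * (3 * Fb0 * t + 1) ^ ((1:ℝ)/3)) :
    Filter.Tendsto (fun t : ℝ =>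
        ((A t - Ab t - a ^ 2 * Bb t - e ^ 2 * Cb t) / A t) ^ 2 +
        ((B t - Bb t - a ^ 2 * Cb t) / B t) ^ 2 +
        ((C t - Cb t) / C t) ^ 2 +
        ((b ^ 2 * Ab t + c ^ 2 * Bb t + d ^ 2 * Cb t + Db t - D t) / D t) ^ 2 +
        2 * (a * Bb t + a * e * Cb t) ^ 2 / (A t * B t) +
        2 * (e * Cb t) ^ 2 / (A t * C t) +
        2 * (b * Ab t + a * c * Bb t + d * e * Cb t) ^ 2 / (A t * D t) +
        2 * (a * Cb t) ^ 2 / (B t * C t) +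
        2 * (c * Bb t + a * d * Cb t) ^ 2 / (B t * D t) +
        2 * (d * Cb t) ^ 2 / (C t * D t))
      Filter.atTop (nhds 0) ↔
      ((m1 / l1) * (Eb0 / E0) ^ ((1:ℝ)/3) = 1 ∧
       (m2 / l2) * (E0 / Eb0) ^ ((1:ℝ)/3) * (Fb0 / F0) ^ ((1:ℝ)/3) = 1 ∧
       (m3 / l3) * (F0 / Fb0) ^ ((1:ℝ)/3) = 1 ∧
       (m4 / l4) * (Eb0 / E0) ^ ((1:ℝ)/3) * (Fb0 / F0) ^ ((1:ℝ)/3) = 1) := by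
  have hE0' : 0 < E0 := by rw [hE0]; positivity
  have hF0' : 0 < F0 := by rw [hF0]; positivity
  have hEb0' : 0 < Eb0 := by rw [hEb0]; positivity
  have hFb0' : 0 < Fb0 := by rw [hFb0]; positivity
  -- basic convergent building blocks
  have hφ : ∀ p q : ℝ, 0 < p → 0 < q →
      Tendsto (fun t : ℝ => ((3 * p * t + 1) / (3 * q * t + 1)) ^ ((1:ℝ)/3)) atTop
        (nhds ((p / q) ^ ((1:ℝ)/3))) := by
    intro p q hp hq
    have h1 : Tendsto (fun t : ℝ => (3 * p * t + 1) / (3 * q * t + 1)) atTop (nhds (p / q)) := by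
      have heq : (fun t : ℝ => (3 * p * t + 1) / (3 * q * t + 1)) =ᶠ[atTop]
          (fun t : ℝ => (3 * p + t⁻¹) / (3 * q + t⁻¹)) := by
        filter_upwards [eventually_gt_atTop (0:ℝ)] with t ht
        have hd1 : (0:ℝ) < 3 * q * t + 1 := by positivity
        have hd2 : (0:ℝ) < 3 * q + t⁻¹ := by positivity
        rw [div_eq_div_iff hd1.ne' hd2.ne']
        field_simp
        try ring
      have h2 : Tendsto (fun t : ℝ => (3 * p + t⁻¹) / (3 * q + t⁻¹)) atTop
          (nhds ((3 * p + 0) / (3 * q + 0))) :=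
        (tendsto_const_nhds.add tendsto_inv_atTop_zero).div
          (tendsto_const_nhds.add tendsto_inv_atTop_zero)
          (by positivity)
      rw [add_zero, add_zero, mul_div_mul_left _ _ (by norm_num : (3:ℝ) ≠ 0)] at h2
      exact h2.congr' heq.symm
    exact (Real.continuousAt_rpow_const (p / q) ((1:ℝ)/3)
      (Or.inr (by norm_num))).tendsto.comp h1
  have hψ : ∀ p : ℝ, 0 < p →
      Tendsto (fun t : ℝ => ((3 * p * t + 1) ^ ((1:ℝ)/3))⁻¹) atTop (nhds 0) := by
    intro p hp
    have h1 : Tendsto (fun t : ℝ => 3 * p * t + 1) atTop atTop :=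
      tendsto_atTop_add_const_right _ _
        (Tendsto.const_mul_atTop (by positivity : (0:ℝ) < 3 * p) tendsto_id)
    exact tendsto_inv_atTop_zero.comp
      ((tendsto_rpow_atTop (by norm_num : (0:ℝ) < (1:ℝ)/3)).comp h1)
  have pEbE := hφ Eb0 E0 hEb0' hE0'
  have pFbEb := hφ Fb0 Eb0 hFb0' hEb0'
  have pEEb := hφ E0 Eb0 hE0' hEb0'
  have pFbF := hφ Fb0 F0 hFb0' hF0'
  have pEFb := hφ E0 Fb0 hE0' hFb0'
  have pFE := hφ F0 E0 hF0' hE0'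
  have pFFb := hφ F0 Fb0 hF0' hFb0'
  have pEF := hφ E0 F0 hE0' hF0'
  have qE := hψ E0 hE0'
  have qF := hψ F0 hF0'
  have qFb := hψ Fb0 hFb0'
  -- the ten summands and their limits
  have T1 : Tendsto (fun t : ℝ =>
      (1 - m1 / l1 * ((3 * Eb0 * t + 1) / (3 * E0 * t + 1)) ^ ((1:ℝ)/3)
        - a ^ 2 * (m2 / l1 * ((3 * Fb0 * t + 1) / (3 * Eb0 * t + 1)) ^ ((1:ℝ)/3) *
            ((3 * E0 * t + 1) ^ ((1:ℝ)/3))⁻¹)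
        - e ^ 2 * (m3 / l1 * ((3 * Fb0 * t + 1) ^ ((1:ℝ)/3))⁻¹ *
            ((3 * E0 * t + 1) ^ ((1:ℝ)/3))⁻¹)) ^ 2) atTop
      (nhds ((1 - m1 / l1 * (Eb0 / E0) ^ ((1:ℝ)/3)
        - a ^ 2 * (m2 / l1 * (Fb0 / Eb0) ^ ((1:ℝ)/3) * 0)
        - e ^ 2 * (m3 / l1 * 0 * 0)) ^ 2)) :=
    (((tendsto_const_nhds.sub (pEbE.const_mul (m1 / l1))).sub
        (((pFbEb.const_mul (m2 / l1)).mul qE).const_mul (a ^ 2))).sub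
        (((qFb.const_mul (m3 / l1)).mul qE).const_mul (e ^ 2))).pow 2
  have T2 : Tendsto (fun t : ℝ =>
      (1 - m2 / l2 * ((3 * E0 * t + 1) / (3 * Eb0 * t + 1)) ^ ((1:ℝ)/3) *
            ((3 * Fb0 * t + 1) / (3 * F0 * t + 1)) ^ ((1:ℝ)/3)
        - a ^ 2 * (m3 / l2 * ((3 * E0 * t + 1) / (3 * Fb0 * t + 1)) ^ ((1:ℝ)/3) *
            ((3 * F0 * t + 1) ^ ((1:ℝ)/3))⁻¹)) ^ 2) atTop
      (nhds ((1 - m2 / l2 * (E0 / Eb0) ^ ((1:ℝ)/3) * (Fb0 / F0) ^ ((1:ℝ)/3)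
        - a ^ 2 * (m3 / l2 * (E0 / Fb0) ^ ((1:ℝ)/3) * 0)) ^ 2)) :=
    ((tendsto_const_nhds.sub ((pEEb.const_mul (m2 / l2)).mul pFbF)).sub
        (((pEFb.const_mul (m3 / l2)).mul qF).const_mul (a ^ 2))).pow 2
  have T3 : Tendsto (fun t : ℝ =>
      (1 - m3 / l3 * ((3 * F0 * t + 1) / (3 * Fb0 * t + 1)) ^ ((1:ℝ)/3)) ^ 2) atTop
      (nhds ((1 - m3 / l3 * (F0 / Fb0) ^ ((1:ℝ)/3)) ^ 2)) :=
    (tendsto_const_nhds.sub (pFFb.const_mul (m3 / l3))).pow 2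
  have T4 : Tendsto (fun t : ℝ =>
      (b ^ 2 * (m1 / l4 * ((3 * Eb0 * t + 1) / (3 * E0 * t + 1)) ^ ((1:ℝ)/3) *
            ((3 * F0 * t + 1) ^ ((1:ℝ)/3))⁻¹)
        + c ^ 2 * (m2 / l4 * ((3 * Fb0 * t + 1) / (3 * Eb0 * t + 1)) ^ ((1:ℝ)/3) *
            ((3 * E0 * t + 1) ^ ((1:ℝ)/3))⁻¹ * ((3 * F0 * t + 1) ^ ((1:ℝ)/3))⁻¹)
        + d ^ 2 * (m3 / l4 * ((3 * Fb0 * t + 1) ^ ((1:ℝ)/3))⁻¹ *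
            ((3 * E0 * t + 1) ^ ((1:ℝ)/3))⁻¹ * ((3 * F0 * t + 1) ^ ((1:ℝ)/3))⁻¹)
        + m4 / l4 * ((3 * Eb0 * t + 1) / (3 * E0 * t + 1)) ^ ((1:ℝ)/3) *
            ((3 * Fb0 * t + 1) / (3 * F0 * t + 1)) ^ ((1:ℝ)/3) - 1) ^ 2) atTop
      (nhds ((b ^ 2 * (m1 / l4 * (Eb0 / E0) ^ ((1:ℝ)/3) * 0)
        + c ^ 2 * (m2 / l4 * (Fb0 / Eb0) ^ ((1:ℝ)/3) * 0 * 0)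
        + d ^ 2 * (m3 / l4 * 0 * 0 * 0)
        + m4 / l4 * (Eb0 / E0) ^ ((1:ℝ)/3) * (Fb0 / F0) ^ ((1:ℝ)/3) - 1) ^ 2)) :=
    (((((((pEbE.const_mul (m1 / l4)).mul qF).const_mul (b ^ 2)).add
        ((((pFbEb.const_mul (m2 / l4)).mul qE).mul qF).const_mul (c ^ 2))).add
        ((((qFb.const_mul (m3 / l4)).mul qE).mul qF).const_mul (d ^ 2))).add
        (((pEbE.const_mul (m4 / l4)).mul pFbF))).sub tendsto_const_nhds).pow 2
  have T5 : Tendsto (fun t : ℝ =>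
      2 * (a * (m2 / l2 * ((3 * E0 * t + 1) / (3 * Eb0 * t + 1)) ^ ((1:ℝ)/3) *
            ((3 * Fb0 * t + 1) / (3 * F0 * t + 1)) ^ ((1:ℝ)/3))
        + a * e * (m3 / l2 * ((3 * E0 * t + 1) / (3 * Fb0 * t + 1)) ^ ((1:ℝ)/3) *
            ((3 * F0 * t + 1) ^ ((1:ℝ)/3))⁻¹)) ^ 2 *
        (l2 / l1 * ((3 * F0 * t + 1) / (3 * E0 * t + 1)) ^ ((1:ℝ)/3) *
            ((3 * E0 * t + 1) ^ ((1:ℝ)/3))⁻¹)) atTop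
      (nhds (2 * (a * (m2 / l2 * (E0 / Eb0) ^ ((1:ℝ)/3) * (Fb0 / F0) ^ ((1:ℝ)/3))
        + a * e * (m3 / l2 * (E0 / Fb0) ^ ((1:ℝ)/3) * 0)) ^ 2 *
        (l2 / l1 * (F0 / E0) ^ ((1:ℝ)/3) * 0))) :=
    ((((((pEEb.const_mul (m2 / l2)).mul pFbF).const_mul a).add
        (((pEFb.const_mul (m3 / l2)).mul qF).const_mul (a * e))).pow 2).const_mul 2).mul
        ((pFE.const_mul (l2 / l1)).mul qE)
  have T6 : Tendsto (fun t : ℝ =>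
      2 * (e * (m3 / l3 * ((3 * F0 * t + 1) / (3 * Fb0 * t + 1)) ^ ((1:ℝ)/3))) ^ 2 *
        (l3 / l1 * ((3 * F0 * t + 1) ^ ((1:ℝ)/3))⁻¹ * ((3 * E0 * t + 1) ^ ((1:ℝ)/3))⁻¹)) atTop
      (nhds (2 * (e * (m3 / l3 * (F0 / Fb0) ^ ((1:ℝ)/3))) ^ 2 * (l3 / l1 * 0 * 0))) :=
    (((((pFFb.const_mul (m3 / l3)).const_mul e).pow 2).const_mul 2).mul
        ((qF.const_mul (l3 / l1)).mul qE))
  have T7 : Tendsto (fun t : ℝ =>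
      2 * (b * (m1 / l1 * ((3 * Eb0 * t + 1) / (3 * E0 * t + 1)) ^ ((1:ℝ)/3))
        + a * c * (m2 / l1 * ((3 * Fb0 * t + 1) / (3 * Eb0 * t + 1)) ^ ((1:ℝ)/3) *
            ((3 * E0 * t + 1) ^ ((1:ℝ)/3))⁻¹)
        + d * e * (m3 / l1 * ((3 * Fb0 * t + 1) ^ ((1:ℝ)/3))⁻¹ *
            ((3 * E0 * t + 1) ^ ((1:ℝ)/3))⁻¹)) ^ 2 *
        (l1 / l4 * ((3 * F0 * t + 1) ^ ((1:ℝ)/3))⁻¹)) atTop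
      (nhds (2 * (b * (m1 / l1 * (Eb0 / E0) ^ ((1:ℝ)/3))
        + a * c * (m2 / l1 * (Fb0 / Eb0) ^ ((1:ℝ)/3) * 0)
        + d * e * (m3 / l1 * 0 * 0)) ^ 2 * (l1 / l4 * 0))) :=
    ((((((pEbE.const_mul (m1 / l1)).const_mul b).add
        (((pFbEb.const_mul (m2 / l1)).mul qE).const_mul (a * c))).add
        (((qFb.const_mul (m3 / l1)).mul qE).const_mul (d * e))).pow 2).const_mul 2).mul
        (qF.const_mul (l1 / l4))
  have T8 : Tendsto (fun t : ℝ =>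
      2 * (a * (m3 / l3 * ((3 * F0 * t + 1) / (3 * Fb0 * t + 1)) ^ ((1:ℝ)/3))) ^ 2 *
        (l3 / l2 * ((3 * E0 * t + 1) / (3 * F0 * t + 1)) ^ ((1:ℝ)/3) *
            ((3 * F0 * t + 1) ^ ((1:ℝ)/3))⁻¹)) atTop
      (nhds (2 * (a * (m3 / l3 * (F0 / Fb0) ^ ((1:ℝ)/3))) ^ 2 *
        (l3 / l2 * (E0 / F0) ^ ((1:ℝ)/3) * 0))) :=
    (((((pFFb.const_mul (m3 / l3)).const_mul a).pow 2).const_mul 2).mul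
        ((pEF.const_mul (l3 / l2)).mul qF))
  have T9 : Tendsto (fun t : ℝ =>
      2 * (c * (m2 / l2 * ((3 * E0 * t + 1) / (3 * Eb0 * t + 1)) ^ ((1:ℝ)/3) *
            ((3 * Fb0 * t + 1) / (3 * F0 * t + 1)) ^ ((1:ℝ)/3))
        + a * d * (m3 / l2 * ((3 * E0 * t + 1) / (3 * Fb0 * t + 1)) ^ ((1:ℝ)/3) *
            ((3 * F0 * t + 1) ^ ((1:ℝ)/3))⁻¹)) ^ 2 *
        (l2 / l4 * ((3 * E0 * t + 1) ^ ((1:ℝ)/3))⁻¹ * ((3 * E0 * t + 1) ^ ((1:ℝ)/3))⁻¹)) atTop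
      (nhds (2 * (c * (m2 / l2 * (E0 / Eb0) ^ ((1:ℝ)/3) * (Fb0 / F0) ^ ((1:ℝ)/3))
        + a * d * (m3 / l2 * (E0 / Fb0) ^ ((1:ℝ)/3) * 0)) ^ 2 * (l2 / l4 * 0 * 0))) :=
    ((((((pEEb.const_mul (m2 / l2)).mul pFbF).const_mul c).add
        (((pEFb.const_mul (m3 / l2)).mul qF).const_mul (a * d))).pow 2).const_mul 2).mul
        ((qE.const_mul (l2 / l4)).mul qE)
  have T10 : Tendsto (fun t : ℝ =>
      2 * (d * (m3 / l3 * ((3 * F0 * t + 1) / (3 * Fb0 * t + 1)) ^ ((1:ℝ)/3))) ^ 2 *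
        (l3 / l4 * ((3 * E0 * t + 1) ^ ((1:ℝ)/3))⁻¹ * ((3 * F0 * t + 1) ^ ((1:ℝ)/3))⁻¹ *
            ((3 * F0 * t + 1) ^ ((1:ℝ)/3))⁻¹)) atTop
      (nhds (2 * (d * (m3 / l3 * (F0 / Fb0) ^ ((1:ℝ)/3))) ^ 2 * (l3 / l4 * 0 * 0 * 0))) :=
    (((((pFFb.const_mul (m3 / l3)).const_mul d).pow 2).const_mul 2).mul
        (((qE.const_mul (l3 / l4)).mul qF).mul qF))
  have hGV := ((((((((T1.add T2).add T3).add T4).add T5).add T6).add T7).add T8).add T9).add T10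
  -- eventual equality of the original function with the building-block expression
  have hEq : (fun t : ℝ =>
        ((A t - Ab t - a ^ 2 * Bb t - e ^ 2 * Cb t) / A t) ^ 2 +
        ((B t - Bb t - a ^ 2 * Cb t) / B t) ^ 2 +
        ((C t - Cb t) / C t) ^ 2 +
        ((b ^ 2 * Ab t + c ^ 2 * Bb t + d ^ 2 * Cb t + Db t - D t) / D t) ^ 2 +
        2 * (a * Bb t + a * e * Cb t) ^ 2 / (A t * B t) +
        2 * (e * Cb t) ^ 2 / (A t * C t) +
        2 * (b * Ab t + a * c * Bb t + d * e * Cb t) ^ 2 / (A t * D t) +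
        2 * (a * Cb t) ^ 2 / (B t * C t) +
        2 * (c * Bb t + a * d * Cb t) ^ 2 / (B t * D t) +
        2 * (d * Cb t) ^ 2 / (C t * D t)) =ᶠ[atTop]
      (fun t : ℝ =>
      (1 - m1 / l1 * ((3 * Eb0 * t + 1) / (3 * E0 * t + 1)) ^ ((1:ℝ)/3)
        - a ^ 2 * (m2 / l1 * ((3 * Fb0 * t + 1) / (3 * Eb0 * t + 1)) ^ ((1:ℝ)/3) *
            ((3 * E0 * t + 1) ^ ((1:ℝ)/3))⁻¹)
        - e ^ 2 * (m3 / l1 * ((3 * Fb0 * t + 1) ^ ((1:ℝ)/3))⁻¹ *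
            ((3 * E0 * t + 1) ^ ((1:ℝ)/3))⁻¹)) ^ 2 +
      (1 - m2 / l2 * ((3 * E0 * t + 1) / (3 * Eb0 * t + 1)) ^ ((1:ℝ)/3) *
            ((3 * Fb0 * t + 1) / (3 * F0 * t + 1)) ^ ((1:ℝ)/3)
        - a ^ 2 * (m3 / l2 * ((3 * E0 * t + 1) / (3 * Fb0 * t + 1)) ^ ((1:ℝ)/3) *
            ((3 * F0 * t + 1) ^ ((1:ℝ)/3))⁻¹)) ^ 2 +
      (1 - m3 / l3 * ((3 * F0 * t + 1) / (3 * Fb0 * t + 1)) ^ ((1:ℝ)/3)) ^ 2 +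
      (b ^ 2 * (m1 / l4 * ((3 * Eb0 * t + 1) / (3 * E0 * t + 1)) ^ ((1:ℝ)/3) *
            ((3 * F0 * t + 1) ^ ((1:ℝ)/3))⁻¹)
        + c ^ 2 * (m2 / l4 * ((3 * Fb0 * t + 1) / (3 * Eb0 * t + 1)) ^ ((1:ℝ)/3) *
            ((3 * E0 * t + 1) ^ ((1:ℝ)/3))⁻¹ * ((3 * F0 * t + 1) ^ ((1:ℝ)/3))⁻¹)
        + d ^ 2 * (m3 / l4 * ((3 * Fb0 * t + 1) ^ ((1:ℝ)/3))⁻¹ *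
            ((3 * E0 * t + 1) ^ ((1:ℝ)/3))⁻¹ * ((3 * F0 * t + 1) ^ ((1:ℝ)/3))⁻¹)
        + m4 / l4 * ((3 * Eb0 * t + 1) / (3 * E0 * t + 1)) ^ ((1:ℝ)/3) *
            ((3 * Fb0 * t + 1) / (3 * F0 * t + 1)) ^ ((1:ℝ)/3) - 1) ^ 2 +
      2 * (a * (m2 / l2 * ((3 * E0 * t + 1) / (3 * Eb0 * t + 1)) ^ ((1:ℝ)/3) *
            ((3 * Fb0 * t + 1) / (3 * F0 * t + 1)) ^ ((1:ℝ)/3))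
        + a * e * (m3 / l2 * ((3 * E0 * t + 1) / (3 * Fb0 * t + 1)) ^ ((1:ℝ)/3) *
            ((3 * F0 * t + 1) ^ ((1:ℝ)/3))⁻¹)) ^ 2 *
        (l2 / l1 * ((3 * F0 * t + 1) / (3 * E0 * t + 1)) ^ ((1:ℝ)/3) *
            ((3 * E0 * t + 1) ^ ((1:ℝ)/3))⁻¹) +
      2 * (e * (m3 / l3 * ((3 * F0 * t + 1) / (3 * Fb0 * t + 1)) ^ ((1:ℝ)/3))) ^ 2 *
        (l3 / l1 * ((3 * F0 * t + 1) ^ ((1:ℝ)/3))⁻¹ * ((3 * E0 * t + 1) ^ ((1:ℝ)/3))⁻¹) +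
      2 * (b * (m1 / l1 * ((3 * Eb0 * t + 1) / (3 * E0 * t + 1)) ^ ((1:ℝ)/3))
        + a * c * (m2 / l1 * ((3 * Fb0 * t + 1) / (3 * Eb0 * t + 1)) ^ ((1:ℝ)/3) *
            ((3 * E0 * t + 1) ^ ((1:ℝ)/3))⁻¹)
        + d * e * (m3 / l1 * ((3 * Fb0 * t + 1) ^ ((1:ℝ)/3))⁻¹ *
            ((3 * E0 * t + 1) ^ ((1:ℝ)/3))⁻¹)) ^ 2 *
        (l1 / l4 * ((3 * F0 * t + 1) ^ ((1:ℝ)/3))⁻¹) +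
      2 * (a * (m3 / l3 * ((3 * F0 * t + 1) / (3 * Fb0 * t + 1)) ^ ((1:ℝ)/3))) ^ 2 *
        (l3 / l2 * ((3 * E0 * t + 1) / (3 * F0 * t + 1)) ^ ((1:ℝ)/3) *
            ((3 * F0 * t + 1) ^ ((1:ℝ)/3))⁻¹) +
      2 * (c * (m2 / l2 * ((3 * E0 * t + 1) / (3 * Eb0 * t + 1)) ^ ((1:ℝ)/3) *
            ((3 * Fb0 * t + 1) / (3 * F0 * t + 1)) ^ ((1:ℝ)/3))
        + a * d * (m3 / l2 * ((3 * E0 * t + 1) / (3 * Fb0 * t + 1)) ^ ((1:ℝ)/3) *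
            ((3 * F0 * t + 1) ^ ((1:ℝ)/3))⁻¹)) ^ 2 *
        (l2 / l4 * ((3 * E0 * t + 1) ^ ((1:ℝ)/3))⁻¹ * ((3 * E0 * t + 1) ^ ((1:ℝ)/3))⁻¹) +
      2 * (d * (m3 / l3 * ((3 * F0 * t + 1) / (3 * Fb0 * t + 1)) ^ ((1:ℝ)/3))) ^ 2 *
        (l3 / l4 * ((3 * E0 * t + 1) ^ ((1:ℝ)/3))⁻¹ * ((3 * F0 * t + 1) ^ ((1:ℝ)/3))⁻¹ *
            ((3 * F0 * t + 1) ^ ((1:ℝ)/3))⁻¹)) := by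
    filter_upwards [eventually_ge_atTop (0:ℝ)] with t ht
    have hu : (0:ℝ) < 3 * E0 * t + 1 := by nlinarith
    have hv : (0:ℝ) < 3 * F0 * t + 1 := by nlinarith
    have huu : (0:ℝ) < 3 * Eb0 * t + 1 := by nlinarith
    have hvv : (0:ℝ) < 3 * Fb0 * t + 1 := by nlinarith
    have key : ∀ p q : ℝ, 0 < 3 * p * t + 1 → 0 < 3 * q * t + 1 →
        ((3 * p * t + 1) / (3 * q * t + 1)) ^ ((1:ℝ)/3)
          = (3 * p * t + 1) ^ ((1:ℝ)/3) * ((3 * q * t + 1) ^ ((1:ℝ)/3))⁻¹ := by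
      intro p q h1 h2
      rw [Real.div_rpow h1.le h2.le, div_eq_mul_inv]
    rw [hA t, hB t, hC t, hD t, hAb t, hBb t, hCb t, hDb t]
    rw [show (-(1:ℝ)/3) = -((1:ℝ)/3) by norm_num]
    rw [Real.rpow_neg hu.le, Real.rpow_neg hv.le, Real.rpow_neg huu.le, Real.rpow_neg hvv.le]
    rw [key Eb0 E0 huu hu, key Fb0 Eb0 hvv huu, key E0 Eb0 hu huu, key Fb0 F0 hvv hv,
        key E0 Fb0 hu hvv, key F0 E0 hv hu, key F0 Fb0 hv hvv, key E0 F0 hu hv]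
    set x := (3 * E0 * t + 1) ^ ((1:ℝ)/3) with hxd
    set y := (3 * F0 * t + 1) ^ ((1:ℝ)/3) with hyd
    set X := (3 * Eb0 * t + 1) ^ ((1:ℝ)/3) with hXd
    set Y := (3 * Fb0 * t + 1) ^ ((1:ℝ)/3) with hYd
    have hx : (0:ℝ) < x := Real.rpow_pos_of_pos hu _
    have hy : (0:ℝ) < y := Real.rpow_pos_of_pos hv _
    have hX : (0:ℝ) < X := Real.rpow_pos_of_pos huu _
    have hY : (0:ℝ) < Y := Real.rpow_pos_of_pos hvv _
    have hadd : ∀ p q r s : ℝ, p = r → q = s → p + q = r + s := by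
      intro p q r s h h'; rw [h, h']
    refine hadd _ _ _ _ (hadd _ _ _ _ (hadd _ _ _ _ (hadd _ _ _ _ (hadd _ _ _ _
      (hadd _ _ _ _ (hadd _ _ _ _ (hadd _ _ _ _ (hadd _ _ _ _ ?_ ?_) ?_) ?_) ?_) ?_)
      ?_) ?_) ?_) ?_ <;>
    · field_simp [hx.ne', hy.ne', hX.ne', hY.ne', hl1.ne', hl2.ne', hl3.ne', hl4.ne']
  have hmainRaw := Tendsto.congr' hEq.symm hGV
  have hmain : Tendsto (fun t : ℝ =>
        ((A t - Ab t - a ^ 2 * Bb t - e ^ 2 * Cb t) / A t) ^ 2 +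
        ((B t - Bb t - a ^ 2 * Cb t) / B t) ^ 2 +
        ((C t - Cb t) / C t) ^ 2 +
        ((b ^ 2 * Ab t + c ^ 2 * Bb t + d ^ 2 * Cb t + Db t - D t) / D t) ^ 2 +
        2 * (a * Bb t + a * e * Cb t) ^ 2 / (A t * B t) +
        2 * (e * Cb t) ^ 2 / (A t * C t) +
        2 * (b * Ab t + a * c * Bb t + d * e * Cb t) ^ 2 / (A t * D t) +
        2 * (a * Cb t) ^ 2 / (B t * C t) +
        2 * (c * Bb t + a * d * Cb t) ^ 2 / (B t * D t) +
        2 * (d * Cb t) ^ 2 / (C t * D t))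
      atTop (nhds
        ((1 - (m1 / l1) * (Eb0 / E0) ^ ((1:ℝ)/3)) ^ 2 +
         (1 - (m2 / l2) * (E0 / Eb0) ^ ((1:ℝ)/3) * (Fb0 / F0) ^ ((1:ℝ)/3)) ^ 2 +
         (1 - (m3 / l3) * (F0 / Fb0) ^ ((1:ℝ)/3)) ^ 2 +
         ((m4 / l4) * (Eb0 / E0) ^ ((1:ℝ)/3) * (Fb0 / F0) ^ ((1:ℝ)/3) - 1) ^ 2)) := by
    have repl : ∀ (f : ℝ → ℝ) (v w : ℝ), v = w → Tendsto f atTop (nhds v) →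
        Tendsto f atTop (nhds w) := by
      intro f v w hvw h
      rwa [hvw] at h
    refine repl _ _ _ ?_ hmainRaw
    ring
  constructor
  · intro h
    have h0 := tendsto_nhds_unique h hmain
    have n1 := sq_nonneg (1 - (m1 / l1) * (Eb0 / E0) ^ ((1:ℝ)/3))
    have n2 := sq_nonneg (1 - (m2 / l2) * (E0 / Eb0) ^ ((1:ℝ)/3) * (Fb0 / F0) ^ ((1:ℝ)/3))
    have n3 := sq_nonneg (1 - (m3 / l3) * (F0 / Fb0) ^ ((1:ℝ)/3))
    have n4 := sq_nonneg ((m4 / l4) * (Eb0 / E0) ^ ((1:ℝ)/3) * (Fb0 / F0) ^ ((1:ℝ)/3) - 1)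
    have s1 : (1 - (m1 / l1) * (Eb0 / E0) ^ ((1:ℝ)/3)) ^ 2 = 0 := by linarith
    have s2 : (1 - (m2 / l2) * (E0 / Eb0) ^ ((1:ℝ)/3) * (Fb0 / F0) ^ ((1:ℝ)/3)) ^ 2 = 0 := by
      linarith
    have s3 : (1 - (m3 / l3) * (F0 / Fb0) ^ ((1:ℝ)/3)) ^ 2 = 0 := by linarith
    have s4 : ((m4 / l4) * (Eb0 / E0) ^ ((1:ℝ)/3) * (Fb0 / F0) ^ ((1:ℝ)/3) - 1) ^ 2 = 0 := by
      linarith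
    have e1 := sq_eq_zero_iff.mp s1
    have e2 := sq_eq_zero_iff.mp s2
    have e3 := sq_eq_zero_iff.mp s3
    have e4 := sq_eq_zero_iff.mp s4
    exact ⟨by linarith, by linarith, by linarith, by linarith⟩
  · rintro ⟨h1, h2, h3, h4⟩
    have h0 : ((1 - (m1 / l1) * (Eb0 / E0) ^ ((1:ℝ)/3)) ^ 2 +
         (1 - (m2 / l2) * (E0 / Eb0) ^ ((1:ℝ)/3) * (Fb0 / F0) ^ ((1:ℝ)/3)) ^ 2 +
         (1 - (m3 / l3) * (F0 / Fb0) ^ ((1:ℝ)/3)) ^ 2 +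
         ((m4 / l4) * (Eb0 / E0) ^ ((1:ℝ)/3) * (Fb0 / F0) ^ ((1:ℝ)/3) - 1) ^ 2) = 0 := by
      rw [h1, h2, h3, h4]; norm_num
    rw [h0] at hmain
    exact hmain
end

section
/- Let λ₁,λ₂,λ₃,λ₄ and λ̄₁,λ̄₂,λ̄₃,λ̄₄ be positive reals and let a,b,c be real numbers. Suppose A,B,C,D : [0,∞) → (0,∞) are differentiable and satisfy dA/dt = B/C + C/B + 2, dB/dt = C/A + D/C - B²/(AC), dC/dt = B/A + D/B - C²/(AB), dD/dt = -D²/(BC) with A(0)=λ₁, B(0)=λ₂, C(0)=λ₃, D(0)=λ₄, with A(t)/t → 4, B(t)/C(t) → 1 and B(t) → ∞ as t → ∞; let Ā,B̄,C̄,D̄ satisfy the same ODE system with initial data λ̄₁,λ̄₂,λ̄₃,λ̄₄ and the same asymptotic properties. Then the quantity ((A-Ā-a²B̄-b²C̄-c²D̄)/A)² + ((B-B̄-a²D̄)/B)² + ((C-C̄-b²D̄)/C)² + ((D-D̄)/D)² + 2(aB̄-acD̄)²/(AB) + 2(bC̄+bcD̄)²/(AC) + 2(cD̄)²/(AD) +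 2(abD̄)²/(BC) + 2(aD̄)²/(BD) + 2(bD̄)²/(CD) tends to 0 as t → ∞ if and only if λ̄₂λ̄₃λ̄₄² = λ₂λ₃λ₄², for every choice of a,b,c; in particular the quasi-convergence class [g] is exactly a 3-parameter family. -/
open Filter Set Topology

lemma constOn (f : ℝ → ℝ) (hf : ∀ t ∈ Set.Ici (0:ℝ), HasDerivWithinAt f 0 (Set.Ici 0) t) :
    ∀ t ∈ Set.Ici (0:ℝ), f t = f 0 := by
  intro t ht
  have hcont : ContinuousOn f (Set.Icc 0 t) := fun y hy =>
    ((hf y hy.1).continuousWithinAt).mono (fun z hz => hz.1)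
  exact constant_of_has_deriv_right_zero hcont
    (fun y hy => (hf y hy.1).mono (fun z hz => le_trans hy.1 hz)) t ⟨ht, le_refl t⟩

lemma conservation (l2 l3 l4 : ℝ)
    (A B C D : ℝ → ℝ)
    (hApos : ∀ t ∈ Set.Ici (0:ℝ), 0 < A t) (hBpos : ∀ t ∈ Set.Ici (0:ℝ), 0 < B t)
    (hCpos : ∀ t ∈ Set.Ici (0:ℝ), 0 < C t) (hDpos : ∀ t ∈ Set.Ici (0:ℝ), 0 < D t)
    (hB : ∀ t ∈ Set.Ici (0:ℝ),
      HasDerivWithinAt B (C t / A t + D t / C t - (B t) ^ 2 / (A t * C t)) (Set.Ici 0) t)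
    (hC : ∀ t ∈ Set.Ici (0:ℝ),
      HasDerivWithinAt C (B t / A t + D t / B t - (C t) ^ 2 / (A t * B t)) (Set.Ici 0) t)
    (hD : ∀ t ∈ Set.Ici (0:ℝ),
      HasDerivWithinAt D (-(D t) ^ 2 / (B t * C t)) (Set.Ici 0) t)
    (hB0 : B 0 = l2) (hC0 : C 0 = l3) (hD0 : D 0 = l4) :
    ∀ t ∈ Set.Ici (0:ℝ), B t * C t * (D t) ^ 2 = l2 * l3 * l4 ^ 2 := by
  have key : ∀ t ∈ Set.Ici (0:ℝ),
      HasDerivWithinAt (fun t => B t * C t * (D t) ^ 2) 0 (Set.Ici 0) t := by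
    intro t ht
    have h1 := ((hB t ht).fun_mul (hC t ht)).fun_mul ((hD t ht).fun_pow 2)
    refine h1.congr_deriv (Eq.symm ?_)
    have hA := (hApos t ht).ne'
    have hB' := (hBpos t ht).ne'
    have hC' := (hCpos t ht).ne'
    field_simp
    ring
  intro t ht
  have := constOn _ key t ht
  simpa [hB0, hC0, hD0] using this

lemma Dformula (l2 l3 l4 : ℝ) (hl2 : 0 < l2) (hl3 : 0 < l3) (hl4 : 0 < l4)
    (B C D : ℝ → ℝ)
    (hBpos : ∀ t ∈ Set.Ici (0:ℝ), 0 < B t)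
    (hCpos : ∀ t ∈ Set.Ici (0:ℝ), 0 < C t) (hDpos : ∀ t ∈ Set.Ici (0:ℝ), 0 < D t)
    (hD : ∀ t ∈ Set.Ici (0:ℝ),
      HasDerivWithinAt D (-(D t) ^ 2 / (B t * C t)) (Set.Ici 0) t)
    (hD0 : D 0 = l4)
    (hcons : ∀ t ∈ Set.Ici (0:ℝ), B t * C t * (D t) ^ 2 = l2 * l3 * l4 ^ 2) :
    ∀ t ∈ Set.Ici (0:ℝ),
      ((D t) ^ 3)⁻¹ = (l4 ^ 3)⁻¹ + 3 / (l2 * l3 * l4 ^ 2) * t := by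
  set K := l2 * l3 * l4 ^ 2 with hK
  have hKpos : 0 < K := by positivity
  have key : ∀ t ∈ Set.Ici (0:ℝ),
      HasDerivWithinAt (fun t => ((D t) ^ 3)⁻¹ - 3 / K * t) 0 (Set.Ici 0) t := by
    intro t ht
    have hDt := hDpos t ht
    have hBt := hBpos t ht
    have hCt := hCpos t ht
    have h1 := (((hD t ht).fun_pow 3).fun_inv (by positivity)).fun_sub
      ((hasDerivWithinAt_id t (Set.Ici 0)).const_mul (3 / K))
    refine h1.congr_deriv (Eq.symm ?_)
    have hc := hcons t ht
    have hBC : B t * C t = K / (D t) ^ 2 := by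
      rw [eq_div_iff (by positivity)]; linarith [hc]
    rw [hBC]
    push_cast
    field_simp
    ring
  intro t ht
  have := constOn _ key t ht
  simp only [hD0, mul_zero, sub_zero] at this
  have : ((D t) ^ 3)⁻¹ - 3 / K * t = (l4 ^ 3)⁻¹ := this
  linarith

section
variable (l2 l3 l4 : ℝ)

lemma flow_limits (hl2 : 0 < l2) (hl3 : 0 < l3) (hl4 : 0 < l4)
    (B C D : ℝ → ℝ)
    (hBpos : ∀ t ∈ Set.Ici (0:ℝ), 0 < B t)
    (hCpos : ∀ t ∈ Set.Ici (0:ℝ), 0 < C t) (hDpos : ∀ t ∈ Set.Ici (0:ℝ), 0 < D t)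
    (hcons : ∀ t ∈ Set.Ici (0:ℝ), B t * C t * (D t) ^ 2 = l2 * l3 * l4 ^ 2)
    (hform : ∀ t ∈ Set.Ici (0:ℝ),
      ((D t) ^ 3)⁻¹ = (l4 ^ 3)⁻¹ + 3 / (l2 * l3 * l4 ^ 2) * t)
    (hBClim : Filter.Tendsto (fun t => B t / C t) Filter.atTop (nhds 1)) :
    Filter.Tendsto D Filter.atTop (nhds 0) ∧
    Filter.Tendsto (fun t => B t * D t) Filter.atTop (nhds (Real.sqrt (l2 * l3 * l4 ^ 2))) ∧
    Filter.Tendsto (fun t => t * D t) Filter.atTop Filter.atTop ∧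
    Filter.Tendsto (fun t => B t / t) Filter.atTop (nhds 0) ∧
    Filter.Tendsto (fun t => C t / t) Filter.atTop (nhds 0) ∧
    Filter.Tendsto (fun t => D t / B t) Filter.atTop (nhds 0) := by
  set K := l2 * l3 * l4 ^ 2 with hK
  have hKpos : 0 < K := by positivity
  set c0 : ℝ := (l4 ^ 3)⁻¹ with hc0
  set c1 : ℝ := 3 / K with hc1
  have hc0pos : 0 < c0 := by positivity
  have hc1pos : 0 < c1 := by positivity
  have hlin : Tendsto (fun t : ℝ => c0 + c1 * t) atTop atTop :=
    tendsto_atTop_add_const_left _ c0 (Tendsto.const_mul_atTop hc1pos tendsto_id)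
  have hpos_ev : ∀ᶠ t : ℝ in atTop, 0 < t := eventually_gt_atTop 0
  -- D^3 = (c0 + c1 t)⁻¹ eventually
  have hD3 : ∀ᶠ t : ℝ in atTop, (D t) ^ 3 = (c0 + c1 * t)⁻¹ := by
    filter_upwards [hpos_ev] with t ht
    have h := hform t (le_of_lt ht)
    rw [← h, inv_inv]
  have hD3lim : Tendsto (fun t => (D t) ^ 3) atTop (nhds 0) :=
    Tendsto.congr' (by filter_upwards [hD3] with t h using h.symm)
      (tendsto_inv_atTop_zero.comp hlin)
  -- D → 0 via cube root
  have hDlim : Tendsto D atTop (nhds 0) := by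
    have hcont : ContinuousAt (fun x : ℝ => x ^ ((3:ℝ)⁻¹)) 0 :=
      Real.continuousAt_rpow_const 0 _ (Or.inr (by norm_num))
    have h0 : ((0:ℝ)) ^ ((3:ℝ)⁻¹) = 0 := Real.zero_rpow (by norm_num)
    have h := (hcont.tendsto.comp hD3lim)
    rw [h0] at h
    refine h.congr' ?_
    filter_upwards [hpos_ev] with t ht
    have hDt := hDpos t (le_of_lt ht)
    show ((D t) ^ 3) ^ ((3:ℝ)⁻¹) = D t
    rw [← Real.rpow_natCast (D t) 3, ← Real.rpow_mul hDt.le]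
    norm_num
  -- (BD)² → K
  have hBD2 : Tendsto (fun t => (B t * D t) ^ 2) atTop (nhds K) := by
    have h := hBClim.mul_const K
    rw [one_mul] at h
    refine h.congr' ?_
    filter_upwards [hpos_ev] with t ht
    have h1 := hcons t (le_of_lt ht)
    have hCt := (hCpos t (le_of_lt ht)).ne'
    rw [← h1]
    field_simp
  have hsqrtKpos : 0 < Real.sqrt K := Real.sqrt_pos.mpr hKpos
  have hBD : Tendsto (fun t => B t * D t) atTop (nhds (Real.sqrt K)) := by
    have h := (Real.continuous_sqrt.tendsto K).comp hBD2
    refine h.congr' ?_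
    filter_upwards [hpos_ev] with t ht
    have := mul_pos (hBpos t ht.le) (hDpos t ht.le)
    exact Real.sqrt_sq this.le
  -- t * D → ∞
  have hratlim : Tendsto (fun t : ℝ => t / (c0 + c1 * t)) atTop (nhds c1⁻¹) := by
    have h : Tendsto (fun t : ℝ => (c0 / t + c1)⁻¹) atTop (nhds ((0 + c1)⁻¹)) :=
      (((tendsto_const_nhds.div_atTop tendsto_id).add tendsto_const_nhds).inv₀
        (by simpa using hc1pos.ne'))
    rw [zero_add] at h
    refine h.congr' ?_
    filter_upwards [hpos_ev] with t ht
    have ht' := ht.ne'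
    have hden : 0 < c0 + c1 * t := by positivity
    field_simp
  have hcube : Tendsto (fun t : ℝ => t ^ 3 / (c0 + c1 * t)) atTop atTop := by
    have h := Tendsto.atTop_mul_pos (inv_pos.mpr hc1pos)
      (tendsto_pow_atTop (n := 2) (by norm_num)) hratlim
    refine h.congr (fun t => by ring)
  have htD : Tendsto (fun t => t * D t) atTop atTop := by
    have h3 : Tendsto (fun t => (t * D t) ^ 3) atTop atTop := by
      refine hcube.congr' ?_
      filter_upwards [hD3, hpos_ev] with t h3 ht
      have : 0 < c0 + c1 * t := by positivity
      rw [mul_pow, h3]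
      field_simp
    have h := (tendsto_rpow_atTop (y := (3:ℝ)⁻¹) (by norm_num)).comp h3
    refine h.congr' ?_
    filter_upwards [hpos_ev] with t ht
    have hDt := hDpos t ht.le
    have hpos : (0:ℝ) ≤ t * D t := by positivity
    show ((t * D t) ^ 3) ^ ((3:ℝ)⁻¹) = t * D t
    rw [← Real.rpow_natCast (t * D t) 3, ← Real.rpow_mul hpos]
    norm_num
  -- B / t → 0
  have hBt : Tendsto (fun t => B t / t) atTop (nhds 0) := by
    have h := hBD.mul (tendsto_inv_atTop_zero.comp htD)
    rw [mul_zero] at h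
    refine h.congr' ?_
    filter_upwards [hpos_ev] with t ht
    have hDt := hDpos t ht.le
    show B t * D t * (t * D t)⁻¹ = B t / t
    field_simp
  -- C / B → 1
  have hCB : Tendsto (fun t => C t / B t) atTop (nhds 1) := by
    have h := hBClim.inv₀ one_ne_zero
    rw [inv_one] at h
    refine h.congr (fun t => by rw [inv_div])
  -- C / t → 0
  have hCt : Tendsto (fun t => C t / t) atTop (nhds 0) := by
    have h := hCB.mul hBt
    rw [one_mul] at h
    refine h.congr' ?_
    filter_upwards [hpos_ev] with t ht
    have hBt' := (hBpos t ht.le).ne'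
    show C t / B t * (B t / t) = C t / t
    rw [div_mul_div_comm, mul_comm (B t) t, mul_div_mul_right _ _ hBt']
  -- D / B → 0
  have hDB : Tendsto (fun t => D t / B t) atTop (nhds 0) := by
    have h := ((hDlim.mul hDlim).div hBD hsqrtKpos.ne')
    rw [mul_zero, zero_div] at h
    refine h.congr' ?_
    filter_upwards [hpos_ev] with t ht
    have hDt := (hDpos t ht.le).ne'
    show D t * D t / (B t * D t) = D t / B t
    rw [mul_comm (B t) (D t), mul_div_mul_left _ _ hDt]
  exact ⟨hDlim, hBD, htD, hBt, hCt, hDB⟩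

end

set_option maxHeartbeats 1000000 in
/-- class A7i, different frames: quasi-convergence holds iff
`λ̄₂λ̄₃λ̄₄² = λ₂λ₃λ₄²`, for every choice of `a,b,c`; `[g]` is a
3-parameter family. -/
theorem stmt_10 (l1 l2 l3 l4 m1 m2 m3 m4 a b c : ℝ)
    (hl1 : 0 < l1) (hl2 : 0 < l2) (hl3 : 0 < l3) (hl4 : 0 < l4)
    (hm1 : 0 < m1) (hm2 : 0 < m2) (hm3 : 0 < m3) (hm4 : 0 < m4)
    (A B C D Ab Bb Cb Db : ℝ → ℝ)
    (hApos : ∀ t ∈ Set.Ici (0:ℝ), 0 < A t) (hBpos : ∀ t ∈ Set.Ici (0:ℝ), 0 < B t)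
    (hCpos : ∀ t ∈ Set.Ici (0:ℝ), 0 < C t) (hDpos : ∀ t ∈ Set.Ici (0:ℝ), 0 < D t)
    (hAbpos : ∀ t ∈ Set.Ici (0:ℝ), 0 < Ab t) (hBbpos : ∀ t ∈ Set.Ici (0:ℝ), 0 < Bb t)
    (hCbpos : ∀ t ∈ Set.Ici (0:ℝ), 0 < Cb t) (hDbpos : ∀ t ∈ Set.Ici (0:ℝ), 0 < Db t)
    (hA : ∀ t ∈ Set.Ici (0:ℝ),
      HasDerivWithinAt A (B t / C t + C t / B t + 2) (Set.Ici 0) t)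
    (hB : ∀ t ∈ Set.Ici (0:ℝ),
      HasDerivWithinAt B (C t / A t + D t / C t - (B t) ^ 2 / (A t * C t)) (Set.Ici 0) t)
    (hC : ∀ t ∈ Set.Ici (0:ℝ),
      HasDerivWithinAt C (B t / A t + D t / B t - (C t) ^ 2 / (A t * B t)) (Set.Ici 0) t)
    (hD : ∀ t ∈ Set.Ici (0:ℝ),
      HasDerivWithinAt D (-(D t) ^ 2 / (B t * C t)) (Set.Ici 0) t)
    (hA0 : A 0 = l1) (hB0 : B 0 = l2) (hC0 : C 0 = l3) (hD0 : D 0 = l4)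
    (hAlim : Filter.Tendsto (fun t => A t / t) Filter.atTop (nhds 4))
    (hBClim : Filter.Tendsto (fun t => B t / C t) Filter.atTop (nhds 1))
    (hBlim : Filter.Tendsto B Filter.atTop Filter.atTop)
    (hAb : ∀ t ∈ Set.Ici (0:ℝ),
      HasDerivWithinAt Ab (Bb t / Cb t + Cb t / Bb t + 2) (Set.Ici 0) t)
    (hBb : ∀ t ∈ Set.Ici (0:ℝ),
      HasDerivWithinAt Bb (Cb t / Ab t + Db t / Cb t - (Bb t) ^ 2 / (Ab t * Cb t)) (Set.Ici 0) t)
    (hCb : ∀ t ∈ Set.Ici (0:ℝ),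
      HasDerivWithinAt Cb (Bb t / Ab t + Db t / Bb t - (Cb t) ^ 2 / (Ab t * Bb t)) (Set.Ici 0) t)
    (hDb : ∀ t ∈ Set.Ici (0:ℝ),
      HasDerivWithinAt Db (-(Db t) ^ 2 / (Bb t * Cb t)) (Set.Ici 0) t)
    (hAb0 : Ab 0 = m1) (hBb0 : Bb 0 = m2) (hCb0 : Cb 0 = m3) (hDb0 : Db 0 = m4)
    (hAblim : Filter.Tendsto (fun t => Ab t / t) Filter.atTop (nhds 4))
    (hBbClim : Filter.Tendsto (fun t => Bb t / Cb t) Filter.atTop (nhds 1))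
    (hBblim : Filter.Tendsto Bb Filter.atTop Filter.atTop) :
    Filter.Tendsto (fun t : ℝ =>
        ((A t - Ab t - a ^ 2 * Bb t - b ^ 2 * Cb t - c ^ 2 * Db t) / A t) ^ 2 +
        ((B t - Bb t - a ^ 2 * Db t) / B t) ^ 2 +
        ((C t - Cb t - b ^ 2 * Db t) / C t) ^ 2 +
        ((D t - Db t) / D t) ^ 2 +
        2 * (a * Bb t - a * c * Db t) ^ 2 / (A t * B t) +
        2 * (b * Cb t + b * c * Db t) ^ 2 / (A t * C t) +
        2 * (c * Db t) ^ 2 / (A t * D t) +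
        2 * (a * b * Db t) ^ 2 / (B t * C t) +
        2 * (a * Db t) ^ 2 / (B t * D t) +
        2 * (b * Db t) ^ 2 / (C t * D t))
      Filter.atTop (nhds 0) ↔ m2 * m3 * m4 ^ 2 = l2 * l3 * l4 ^ 2 := by
  have hcons := conservation l2 l3 l4 A B C D hApos hBpos hCpos hDpos hB hC hD hB0 hC0 hD0
  have hconsb := conservation m2 m3 m4 Ab Bb Cb Db hAbpos hBbpos hCbpos hDbpos hBb hCb hDb
    hBb0 hCb0 hDb0
  have hform := Dformula l2 l3 l4 hl2 hl3 hl4 B C D hBpos hCpos hDpos hD hD0 hcons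
  have hformb := Dformula m2 m3 m4 hm2 hm3 hm4 Bb Cb Db hBbpos hCbpos hDbpos hDb hDb0 hconsb
  obtain ⟨hDlim, hBD, htD, hBt, hCt, hDB⟩ :=
    flow_limits l2 l3 l4 hl2 hl3 hl4 B C D hBpos hCpos hDpos hcons hform hBClim
  obtain ⟨hDblim, hBbDb, htDb, hBbt, hCbt, hDbBbX⟩ :=
    flow_limits m2 m3 m4 hm2 hm3 hm4 Bb Cb Db hBbpos hCbpos hDbpos hconsb hformb hBbClim
  set K := l2 * l3 * l4 ^ 2 with hK_def
  set Kb := m2 * m3 * m4 ^ 2 with hKb_def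
  have hKpos : 0 < K := by positivity
  have hKbpos : 0 < Kb := by positivity
  set u : ℝ := Kb / K with hu_def
  have hu : 0 < u := by positivity
  set s : ℝ := u ^ ((6:ℝ)⁻¹) with hs_def
  have hspos : 0 < s := Real.rpow_pos_of_pos hu _
  have hr_def : u ^ ((3:ℝ)⁻¹) = s ^ 2 := by
    rw [hs_def, ← Real.rpow_natCast (u ^ ((6:ℝ)⁻¹)) 2, ← Real.rpow_mul hu.le]
    norm_num
  have hpos_ev : ∀ᶠ t : ℝ in Filter.atTop, 0 < t := eventually_gt_atTop 0
  have hsqK : (0:ℝ) < Real.sqrt K := Real.sqrt_pos.mpr hKpos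
  -- ratio of cubes
  have hq : Tendsto (fun t => (Db t / D t) ^ 3) atTop (𝓝 u) := by
    have hq0 : Tendsto (fun t : ℝ => ((l4^3)⁻¹ / t + 3/K) / ((m4^3)⁻¹ / t + 3/Kb)) atTop
        (𝓝 ((0 + 3/K) / (0 + 3/Kb))) :=
      (((tendsto_const_nhds.div_atTop tendsto_id).add tendsto_const_nhds).div
        ((tendsto_const_nhds.div_atTop tendsto_id).add tendsto_const_nhds)
        (by positivity))
    have he : ((0:ℝ) + 3/K) / (0 + 3/Kb) = u := by
      rw [hu_def]; field_simp; ring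
    rw [he] at hq0
    refine hq0.congr' ?_
    filter_upwards [hpos_ev] with t ht
    have hf := hform t ht.le
    have hfb := hformb t ht.le
    have e1 : D t ^ 3 = ((l4^3)⁻¹ + 3/K * t)⁻¹ := by rw [← hf, inv_inv]
    have e2 : Db t ^ 3 = ((m4^3)⁻¹ + 3/Kb * t)⁻¹ := by rw [← hfb, inv_inv]
    have p1 : (0:ℝ) < (l4^3)⁻¹ + 3/K * t := by positivity
    have p2 : (0:ℝ) < (m4^3)⁻¹ + 3/Kb * t := by positivity
    rw [div_pow, e1, e2]
    rw [div_eq_div_iff (by positivity) (by positivity)]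
    field_simp
  have hDbD : Tendsto (fun t => Db t / D t) atTop (𝓝 (s ^ 2)) := by
    have hcont : ContinuousAt (fun x : ℝ => x ^ ((3:ℝ)⁻¹)) u :=
      Real.continuousAt_rpow_const u _ (Or.inl hu.ne')
    have h := hcont.tendsto.comp hq
    rw [show u ^ ((3:ℝ)⁻¹) = s ^ 2 from hr_def] at h
    refine h.congr' ?_
    filter_upwards [hpos_ev] with t ht
    have h1 := hDpos t ht.le
    have h2 := hDbpos t ht.le
    have hpos : (0:ℝ) ≤ Db t / D t := by positivity
    show ((Db t / D t) ^ 3) ^ ((3:ℝ)⁻¹) = Db t / D t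
    rw [← Real.rpow_natCast (Db t / D t) 3, ← Real.rpow_mul hpos]
    norm_num
  have hDDb : Tendsto (fun t => D t / Db t) atTop (𝓝 ((s ^ 2)⁻¹)) := by
    have h := hDbD.inv₀ (by positivity)
    refine h.congr (fun t => ?_)
    rw [inv_div]
  -- Bb / B → s
  have hBbB : Tendsto (fun t => Bb t / B t) atTop (𝓝 s) := by
    have h := (hBbDb.div hBD hsqK.ne').mul hDDb
    have he : Real.sqrt Kb / Real.sqrt K * (s ^ 2)⁻¹ = s := by
      rw [← Real.sqrt_div hKbpos.le, ← hu_def, ← hr_def, Real.sqrt_eq_rpow,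
        ← Real.rpow_neg hu.le, ← Real.rpow_add hu, hs_def]
      norm_num
    rw [he] at h
    refine h.congr' ?_
    filter_upwards [hpos_ev] with t ht
    have h1 := (hBpos t ht.le).ne'
    have h2 := (hDpos t ht.le).ne'
    have h3 := (hDbpos t ht.le).ne'
    simp only [Pi.div_apply]; field_simp
  -- Cb / C → s
  have hCbBb : Tendsto (fun t => Cb t / Bb t) atTop (𝓝 1) := by
    have h := hBbClim.inv₀ one_ne_zero
    rw [inv_one] at h
    exact h.congr (fun t => by rw [inv_div])
  have hCbC : Tendsto (fun t => Cb t / C t) atTop (𝓝 s) := by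
    have h := (hCbBb.mul hBbB).mul hBClim
    rw [one_mul, mul_one] at h
    refine h.congr' ?_
    filter_upwards [hpos_ev] with t ht
    have h1 := (hBpos t ht.le).ne'
    have h2 := (hBbpos t ht.le).ne'
    field_simp
  -- Db / B → 0 and Db / C → 0
  have hDbB : Tendsto (fun t => Db t / B t) atTop (𝓝 0) := by
    have h := hDbD.mul hDB
    rw [mul_zero] at h
    refine h.congr' ?_
    filter_upwards [hpos_ev] with t ht
    have h2 := (hDpos t ht.le).ne'
    field_simp
  have hDbC : Tendsto (fun t => Db t / C t) atTop (𝓝 0) := by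
    have h := hDbB.mul hBClim
    rw [zero_mul] at h
    refine h.congr' ?_
    filter_upwards [hpos_ev] with t ht
    have h1 := (hBpos t ht.le).ne'
    field_simp
  have hDbt : Tendsto (fun t : ℝ => Db t / t) atTop (𝓝 0) := hDblim.div_atTop tendsto_id
  -- B/A, C/A → 0 ; A*D → ∞ ; C*D → √K
  have hBA : Tendsto (fun t => B t / A t) atTop (𝓝 0) := by
    have h := hBt.div hAlim (by norm_num)
    rw [zero_div] at h
    refine h.congr' ?_
    filter_upwards [hpos_ev] with t ht
    have h1 := (hApos t ht.le).ne'
    simp only [Pi.div_apply]; field_simp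
  have hCA : Tendsto (fun t => C t / A t) atTop (𝓝 0) := by
    have h := hCt.div hAlim (by norm_num)
    rw [zero_div] at h
    refine h.congr' ?_
    filter_upwards [hpos_ev] with t ht
    have h1 := (hApos t ht.le).ne'
    simp only [Pi.div_apply]; field_simp
  have hAD : Tendsto (fun t => A t * D t) atTop atTop := by
    have h := Tendsto.pos_mul_atTop (by norm_num : (0:ℝ) < 4) hAlim htD
    refine h.congr' ?_
    filter_upwards [hpos_ev] with t ht
    field_simp
  have hCB1 : Tendsto (fun t => C t / B t) atTop (𝓝 1) := by
    have h := hBClim.inv₀ one_ne_zero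
    rw [inv_one] at h
    exact h.congr (fun t => by rw [inv_div])
  have hCD : Tendsto (fun t => C t * D t) atTop (𝓝 (Real.sqrt K)) := by
    have h := hCB1.mul hBD
    rw [one_mul] at h
    refine h.congr' ?_
    filter_upwards [hpos_ev] with t ht
    have h1 := (hBpos t ht.le).ne'
    field_simp
  -- the ten terms
  have h1 : Tendsto (fun t => ((A t - Ab t - a ^ 2 * Bb t - b ^ 2 * Cb t - c ^ 2 * Db t) / A t) ^ 2)
      atTop (𝓝 0) := by
    have hnum := (((hAlim.sub hAblim).sub (hBbt.const_mul (a^2))).sub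
      (hCbt.const_mul (b^2))).sub (hDbt.const_mul (c^2))
    have hq := hnum.div hAlim (by norm_num)
    have he : ((4:ℝ) - 4 - a^2*0 - b^2*0 - c^2*0) / 4 = 0 := by norm_num
    rw [he] at hq
    have h0 : Tendsto (fun t => (A t - Ab t - a ^ 2 * Bb t - b ^ 2 * Cb t - c ^ 2 * Db t) / A t)
        atTop (𝓝 0) := by
      refine hq.congr' ?_
      filter_upwards [hpos_ev] with t ht
      have hA1 := (hApos t ht.le).ne'
      have ht' := ht.ne'
      simp only [Pi.div_apply]; field_simp
    have := h0.pow 2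
    norm_num at this
    exact this
  have h2 : Tendsto (fun t => ((B t - Bb t - a ^ 2 * Db t) / B t) ^ 2) atTop (𝓝 ((1 - s) ^ 2)) := by
    have hin := (hBbB.const_sub 1).sub (hDbB.const_mul (a^2))
    have he : (1:ℝ) - s - a^2*0 = 1 - s := by ring
    rw [he] at hin
    refine (Tendsto.pow ?_ 2)
    refine hin.congr' ?_
    filter_upwards [hpos_ev] with t ht
    have hB1 := (hBpos t ht.le).ne'
    field_simp
  have h3 : Tendsto (fun t => ((C t - Cb t - b ^ 2 * Db t) / C t) ^ 2) atTop (𝓝 ((1 - s) ^ 2)) := by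
    have hin := (hCbC.const_sub 1).sub (hDbC.const_mul (b^2))
    have he : (1:ℝ) - s - b^2*0 = 1 - s := by ring
    rw [he] at hin
    refine (Tendsto.pow ?_ 2)
    refine hin.congr' ?_
    filter_upwards [hpos_ev] with t ht
    have hC1 := (hCpos t ht.le).ne'
    field_simp
  have h4 : Tendsto (fun t => ((D t - Db t) / D t) ^ 2) atTop (𝓝 ((1 - s ^ 2) ^ 2)) := by
    have hin := hDbD.const_sub 1
    refine (Tendsto.pow ?_ 2)
    refine hin.congr' ?_
    filter_upwards [hpos_ev] with t ht
    have hD1 := (hDpos t ht.le).ne'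
    field_simp
  have h5 : Tendsto (fun t => 2 * (a * Bb t - a * c * Db t) ^ 2 / (A t * B t)) atTop (𝓝 0) := by
    have hin := (hBbB.const_mul a).sub (hDbB.const_mul (a*c))
    have h := ((hin.pow 2).const_mul 2).mul hBA
    have he : 2 * (a * s - a * c * 0) ^ 2 * 0 = (0:ℝ) := by ring
    rw [he] at h
    refine h.congr' ?_
    filter_upwards [hpos_ev] with t ht
    have hA1 := (hApos t ht.le).ne'
    have hB1 := (hBpos t ht.le).ne'
    field_simp
  have h6 : Tendsto (fun t => 2 * (b * Cb t + b * c * Db t) ^ 2 / (A t * C t)) atTop (𝓝 0) := by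
    have hin := (hCbC.const_mul b).add (hDbC.const_mul (b*c))
    have h := ((hin.pow 2).const_mul 2).mul hCA
    have he : 2 * (b * s + b * c * 0) ^ 2 * 0 = (0:ℝ) := by ring
    rw [he] at h
    refine h.congr' ?_
    filter_upwards [hpos_ev] with t ht
    have hA1 := (hApos t ht.le).ne'
    have hC1 := (hCpos t ht.le).ne'
    field_simp
  have h7 : Tendsto (fun t => 2 * (c * Db t) ^ 2 / (A t * D t)) atTop (𝓝 0) := by
    have hnum := ((hDblim.const_mul c).pow 2).const_mul 2
    have h := hnum.mul (tendsto_inv_atTop_zero.comp hAD)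
    have he : 2 * (c * 0) ^ 2 * 0 = (0:ℝ) := by ring
    rw [he] at h
    exact h.congr (fun t => (div_eq_mul_inv _ _).symm)
  have h8 : Tendsto (fun t => 2 * (a * b * Db t) ^ 2 / (B t * C t)) atTop (𝓝 0) := by
    have h := ((((hDblim.const_mul (a*b)).pow 2).const_mul 2).mul (hDlim.pow 2)).div_const K
    have he : 2 * (a * b * 0) ^ 2 * 0 ^ 2 / K = (0:ℝ) := by ring
    rw [he] at h
    refine h.congr' ?_
    filter_upwards [hpos_ev] with t ht
    have hc := hcons t ht.le
    have hB1 := (hBpos t ht.le)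
    have hC1 := (hCpos t ht.le)
    have hD1 := (hDpos t ht.le)
    rw [div_eq_div_iff hKpos.ne' (by positivity)]
    rw [← hc]
    ring
  have h9 : Tendsto (fun t => 2 * (a * Db t) ^ 2 / (B t * D t)) atTop (𝓝 0) := by
    have h := (((hDblim.const_mul a).pow 2).const_mul 2).div hBD hsqK.ne'
    have he : 2 * (a * 0) ^ 2 / Real.sqrt K = (0:ℝ) := by norm_num
    rw [he] at h
    exact h
  have h10 : Tendsto (fun t => 2 * (b * Db t) ^ 2 / (C t * D t)) atTop (𝓝 0) := by
    have h := (((hDblim.const_mul b).pow 2).const_mul 2).div hCD hsqK.ne'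
    have he : 2 * (b * 0) ^ 2 / Real.sqrt K = (0:ℝ) := by norm_num
    rw [he] at h
    exact h
  have hF := ((((((((h1.add h2).add h3).add h4).add h5).add h6).add h7).add h8).add h9).add h10
  have hL : (0:ℝ) + (1-s)^2 + (1-s)^2 + (1-s^2)^2 + 0 + 0 + 0 + 0 + 0 + 0
      = 2*(1-s)^2 + (1-s^2)^2 := by ring
  rw [hL] at hF
  have hs6 : s ^ (6:ℕ) = u := by
    rw [hs_def, ← Real.rpow_natCast (u ^ ((6:ℝ)⁻¹)) 6, ← Real.rpow_mul hu.le]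
    norm_num
  constructor
  · intro h
    have heq := tendsto_nhds_unique hF h
    have hs1 : s = 1 := by nlinarith [sq_nonneg (1-s), sq_nonneg (1-s^2), sq_nonneg s]
    have hu1 : u = 1 := by rw [← hs6, hs1]; norm_num
    have : Kb = K := by
      rw [hu_def] at hu1
      field_simp at hu1
      exact hu1
    exact this
  · intro h
    have hu1 : u = 1 := by rw [hu_def, h, div_self hKpos.ne']
    have hs1 : s = 1 := by rw [hs_def, hu1, Real.one_rpow]
    rw [hs1] at hF
    have : 2*((1:ℝ)-1)^2 + (1-1^2)^2 = 0 := by norm_num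
    rw [this] at hF
    exact hF
end
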